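/- arXiv:0709.1711 — 2 statements merged into one kernel-verified Lean document; each statement's English description precedes it below -/
import Mathlib

section
/- Let n ≥ 6 be even. Let P be the group with generators g_{i(i−1)} for i modulo n (so the generators are g_{21}, g_{32}, …, g_{n(n−1)}, g_{1n}) and defining relations g_{n(n−1)} g_{(n−1)(n−2)} g_{(n−2)(n−3)} ⋯ g_{32} g_{21} g_{1n} = 1, g_{n(n−1)} g_{(n−2)(n−3)} ⋯ g_{43} g_{21} = 1, and g_{(n−1)(n−2)} g_{(n−3)(n−4)} ⋯ g_{32} g_{1n} = 1. Then the assignment g_{i(i−1)} ↦ r_i r_{i−1} (indices modulo n) extends to a well-defined group homomorphism P → H_n which is an isomorphism of P onto the subgroup G_n of H_n. -/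
noncomputable section
open Matrix Complex
namespace HView

abbrev W : Type := Fin 2 → ℂ

def herm (x y : W) : ℂ := x 0 * (starRingEnd ℂ) (y 0) - x 1 * (starRingEnd ℂ) (y 1)

def IsNeg (p : W) : Prop := p ≠ 0 ∧ (herm p p).re < 0
def IsIso (p : W) : Prop := p ≠ 0 ∧ herm p p = 0
def IsNonpos (p : W) : Prop := p ≠ 0 ∧ (herm p p).re ≤ 0

def triArea (p₁ p₂ p₃ : W) : ℝ :=
  2 * Complex.arg (-(herm p₁ p₂ * herm p₂ p₃ * herm p₃ p₁))

def Jm : Matrix (Fin 2) (Fin 2) ℂ := !![1, 0; 0, -1]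

def SU11 : Subgroup (SpecialLinearGroup (Fin 2) ℂ) where
  carrier := {A | (A : Matrix (Fin 2) (Fin 2) ℂ)ᴴ * Jm * (A : Matrix (Fin 2) (Fin 2) ℂ) = Jm}
  one_mem' := by simp
  mul_mem' := by
    intro A B hA hB
    simp only [Set.mem_setOf_eq] at hA hB ⊢
    have hco : ((A * B : SpecialLinearGroup (Fin 2) ℂ) : Matrix (Fin 2) (Fin 2) ℂ)
        = (A : Matrix (Fin 2) (Fin 2) ℂ) * (B : Matrix (Fin 2) (Fin 2) ℂ) := rfl
    rw [hco, conjTranspose_mul]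
    calc (B : Matrix (Fin 2) (Fin 2) ℂ)ᴴ * (A : Matrix (Fin 2) (Fin 2) ℂ)ᴴ * Jm *
          ((A : Matrix (Fin 2) (Fin 2) ℂ) * (B : Matrix (Fin 2) (Fin 2) ℂ))
        = (B : Matrix (Fin 2) (Fin 2) ℂ)ᴴ *
          ((A : Matrix (Fin 2) (Fin 2) ℂ)ᴴ * Jm * (A : Matrix (Fin 2) (Fin 2) ℂ)) *
          (B : Matrix (Fin 2) (Fin 2) ℂ) := by noncomm_ring
      _ = Jm := by rw [hA]; exact hB
  inv_mem' := by
    intro A hA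
    simp only [Set.mem_setOf_eq] at hA ⊢
    have h1 : (A : Matrix (Fin 2) (Fin 2) ℂ) *
        ((A⁻¹ : SpecialLinearGroup (Fin 2) ℂ) : Matrix (Fin 2) (Fin 2) ℂ) = 1 := by
      rw [← Matrix.SpecialLinearGroup.coe_mul, mul_inv_cancel,
        Matrix.SpecialLinearGroup.coe_one]
    have h2 : ((A⁻¹ : SpecialLinearGroup (Fin 2) ℂ) : Matrix (Fin 2) (Fin 2) ℂ)ᴴ *
        (A : Matrix (Fin 2) (Fin 2) ℂ)ᴴ = 1 := by
      rw [← conjTranspose_mul, h1, conjTranspose_one]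
    calc ((A⁻¹ : SpecialLinearGroup (Fin 2) ℂ) : Matrix (Fin 2) (Fin 2) ℂ)ᴴ * Jm *
          ((A⁻¹ : SpecialLinearGroup (Fin 2) ℂ) : Matrix (Fin 2) (Fin 2) ℂ)
        = ((A⁻¹ : SpecialLinearGroup (Fin 2) ℂ) : Matrix (Fin 2) (Fin 2) ℂ)ᴴ *
          ((A : Matrix (Fin 2) (Fin 2) ℂ)ᴴ * Jm * (A : Matrix (Fin 2) (Fin 2) ℂ)) *
          ((A⁻¹ : SpecialLinearGroup (Fin 2) ℂ) : Matrix (Fin 2) (Fin 2) ℂ) := by rw [hA]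
      _ = (((A⁻¹ : SpecialLinearGroup (Fin 2) ℂ) : Matrix (Fin 2) (Fin 2) ℂ)ᴴ *
            (A : Matrix (Fin 2) (Fin 2) ℂ)ᴴ) * Jm *
          ((A : Matrix (Fin 2) (Fin 2) ℂ) *
            ((A⁻¹ : SpecialLinearGroup (Fin 2) ℂ) : Matrix (Fin 2) (Fin 2) ℂ)) := by noncomm_ring
      _ = Jm := by rw [h1, h2, one_mul, mul_one]


instance : Fact (Even (Fintype.card (Fin 2))) := ⟨by decide⟩

def negOne : SU11 := ⟨-1, by
  show ((-1 : SpecialLinearGroup (Fin 2) ℂ) : Matrix (Fin 2) (Fin 2) ℂ)ᴴ * Jm *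
    ((-1 : SpecialLinearGroup (Fin 2) ℂ) : Matrix (Fin 2) (Fin 2) ℂ) = Jm
  simp⟩

lemma negOne_mul_negOne : negOne * negOne = 1 := by
  apply Subtype.ext
  show ((-1 : SpecialLinearGroup (Fin 2) ℂ)) * (-1) = 1
  apply Subtype.ext
  show ((-1 : Matrix (Fin 2) (Fin 2) ℂ)) * (-1) = 1
  simp

lemma negOne_central (g : SU11) : g * negOne = negOne * g := by
  apply Subtype.ext
  apply Subtype.ext
  show ((g : SpecialLinearGroup (Fin 2) ℂ) : Matrix (Fin 2) (Fin 2) ℂ) * (-1)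
      = (-1) * ((g : SpecialLinearGroup (Fin 2) ℂ) : Matrix (Fin 2) (Fin 2) ℂ)
  simp

def pm1 : Subgroup SU11 where
  carrier := {1, negOne}
  one_mem' := Or.inl rfl
  mul_mem' := by
    rintro a b (rfl | ha) (rfl | hb)
    · exact Or.inl (one_mul 1)
    · rw [Set.mem_singleton_iff] at hb; subst hb
      exact Or.inr (by rw [one_mul]; rfl)
    · rw [Set.mem_singleton_iff] at ha; subst ha
      exact Or.inr (by rw [mul_one]; rfl)
    · rw [Set.mem_singleton_iff] at ha hb; subst ha; subst hb
      exact Or.inl negOne_mul_negOne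
  inv_mem' := by
    rintro a (rfl | ha)
    · exact Or.inl inv_one
    · rw [Set.mem_singleton_iff] at ha; subst ha
      refine Or.inr ?_
      rw [Set.mem_singleton_iff, inv_eq_iff_mul_eq_one, negOne_mul_negOne]

instance pm1_normal : pm1.Normal := by
  constructor
  intro x hx g
  rcases hx with rfl | hx
  · simpa using pm1.one_mem
  · rw [Set.mem_singleton_iff] at hx; subst hx
    have h : g * negOne * g⁻¹ = negOne := by
      rw [negOne_central, mul_assoc, mul_inv_cancel, mul_one]
    rw [h]
    exact Or.inr rfl

abbrev PU11 := SU11 ⧸ pm1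

def mobius (A : SU11) (z : ℂ) : ℂ :=
  (((A : SpecialLinearGroup (Fin 2) ℂ) : Matrix (Fin 2) (Fin 2) ℂ) 0 0 * z +
    ((A : SpecialLinearGroup (Fin 2) ℂ) : Matrix (Fin 2) (Fin 2) ℂ) 0 1) /
  (((A : SpecialLinearGroup (Fin 2) ℂ) : Matrix (Fin 2) (Fin 2) ℂ) 1 0 * z +
    ((A : SpecialLinearGroup (Fin 2) ℂ) : Matrix (Fin 2) (Fin 2) ℂ) 1 1)

lemma mobius_mul_negOne (A : SU11) (z : ℂ) : mobius (A * negOne) z = mobius A z := by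
  have hm : (((A * negOne : SU11) : SpecialLinearGroup (Fin 2) ℂ) : Matrix (Fin 2) (Fin 2) ℂ)
      = -(((A : SpecialLinearGroup (Fin 2) ℂ) : Matrix (Fin 2) (Fin 2) ℂ)) := by
    show ((A : SpecialLinearGroup (Fin 2) ℂ) : Matrix (Fin 2) (Fin 2) ℂ) *
      (-1 : Matrix (Fin 2) (Fin 2) ℂ) = _
    simp
  set M := ((A : SpecialLinearGroup (Fin 2) ℂ) : Matrix (Fin 2) (Fin 2) ℂ) with hM
  unfold mobius
  rw [hm]
  simp only [Matrix.neg_apply]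
  rw [show -M 0 0 * z + -M 0 1 = -(M 0 0 * z + M 0 1) by ring,
    show -M 1 0 * z + -M 1 1 = -(M 1 0 * z + M 1 1) by ring, neg_div_neg_eq]

def pact (g : PU11) : ℂ → ℂ :=
  Quotient.liftOn' g (fun A => mobius A) (by
    intro a b hab
    have hab' : a⁻¹ * b ∈ pm1 := QuotientGroup.leftRel_apply.mp hab
    have key : b = a ∨ b = a * negOne := by
      rcases hab' with h | h
      · left
        have : a⁻¹ * b = 1 := h
        rw [inv_mul_eq_one] at this
        exact this.symm
      · right
        rw [Set.mem_singleton_iff] at h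
        rw [inv_mul_eq_iff_eq_mul] at h
        exact h
    funext z
    rcases key with rfl | rfl
    · rfl
    · exact (mobius_mul_negOne a z).symm)

lemma pact_mk (A : SU11) (z : ℂ) : pact (QuotientGroup.mk A : PU11) z = mobius A z := rfl


instance : TopologicalSpace (SpecialLinearGroup (Fin 2) ℂ) :=
  instTopologicalSpaceSubtype

def IsHyperbolic (g : PU11) : Prop :=
  ∃ A : SU11, (QuotientGroup.mk A : PU11) = g ∧
    (Matrix.trace ((A : SpecialLinearGroup (Fin 2) ℂ) : Matrix (Fin 2) (Fin 2) ℂ)).im = 0 ∧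
    2 < |(Matrix.trace ((A : SpecialLinearGroup (Fin 2) ℂ) : Matrix (Fin 2) (Fin 2) ℂ)).re|

def IsAttractor (g : PU11) (z : ℂ) : Prop :=
  ‖z‖ = 1 ∧ ∃ A : SU11, (QuotientGroup.mk A : PU11) = g ∧
    ∃ lam : ℂ, 1 < ‖lam‖ ∧
      ((A : SpecialLinearGroup (Fin 2) ℂ) : Matrix (Fin 2) (Fin 2) ℂ).mulVec ![z, 1]
        = lam • ![z, 1]

def IsRepeller (g : PU11) (z : ℂ) : Prop :=
  ‖z‖ = 1 ∧ ∃ A : SU11, (QuotientGroup.mk A : PU11) = g ∧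
    ∃ lam : ℂ, ‖lam‖ < 1 ∧
      ((A : SpecialLinearGroup (Fin 2) ℂ) : Matrix (Fin 2) (Fin 2) ℂ).mulVec ![z, 1]
        = lam • ![z, 1]

def IsPositiveCycle (l : List ℂ) : Prop :=
  3 ≤ l.length ∧ ∃ t : Fin l.length → ℝ,
    StrictMono t ∧ (∀ j k : Fin l.length, t j - t k < 2 * Real.pi) ∧
    ∀ j : Fin l.length, l.get j = Complex.exp (Complex.I * (t j : ℂ))

def IsNegativeCycle (l : List ℂ) : Prop :=
  3 ≤ l.length ∧ ∃ t : Fin l.length → ℝ,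
    StrictAnti t ∧ (∀ j k : Fin l.length, t j - t k < 2 * Real.pi) ∧
    ∀ j : Fin l.length, l.get j = Complex.exp (Complex.I * (t j : ℂ))

def longRel (n : ℕ) : FreeGroup (ZMod n) :=
  (((List.range n).map (fun k => FreeGroup.of ((k + 1 : ℕ) : ZMod n))).reverse).prod

def Hrels (n : ℕ) : Set (FreeGroup (ZMod n)) :=
  {x | ∃ i : ZMod n, x = FreeGroup.of i * FreeGroup.of i} ∪ {longRel n}

abbrev H (n : ℕ) := PresentedGroup (Hrels n)

def r (n : ℕ) (i : ZMod n) : H n := PresentedGroup.of i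

def pts {n : ℕ} (A : ZMod n → SU11) (p : W) : ℕ → W
  | 0 => p
  | (k+1) => (((A ((k + 1 : ℕ) : ZMod n) : SpecialLinearGroup (Fin 2) ℂ)
      : Matrix (Fin 2) (Fin 2) ℂ)).mulVec (pts A p k)

def IsLift {n : ℕ} (ρ : H n →* PU11) (A : ZMod n → SU11) : Prop :=
  (∀ i : ZMod n, (QuotientGroup.mk (A i) : PU11) = ρ (r n i)) ∧
  ((((List.range n).map (fun k => A ((k + 1 : ℕ) : ZMod n))).reverse).prod = 1 ∨
   (((List.range n).map (fun k => A ((k + 1 : ℕ) : ZMod n))).reverse).prod = negOne)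

def areaRep (n : ℕ) (A : ZMod n → SU11) (c p : W) : ℝ :=
  ∑ i ∈ Finset.range n, triArea c (pts A p (i + 1)) (pts A p (i + 2))

def HasArea {n : ℕ} (ρ : H n →* PU11) (a : ℝ) : Prop :=
  ∀ A : ZMod n → SU11, IsLift ρ A → ∀ c p : W, IsNeg c → IsNeg p → areaRep n A c p = a

def orbitSeq {n : ℕ} (ρ : H n →* PU11) (j : ZMod n) (z : ℂ) : ℕ → ℂ
  | 0 => z
  | (k+1) => pact (ρ (r n (j + (k : ℕ)))) (orbitSeq ρ j z k)

def iCycle {n : ℕ} (ρ : H n →* PU11) (i : ZMod n) (b e : ℂ) : List ℂ :=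
  ((List.range (n - 2)).map (fun k => [orbitSeq ρ (i + 1) b k, orbitSeq ρ (i + 1) e k])).flatten

def IsReflection (g : PU11) (q : W) : Prop :=
  ∃ A : SU11, (QuotientGroup.mk A : PU11) = g ∧
    ∀ x : W, ((A : SpecialLinearGroup (Fin 2) ℂ) : Matrix (Fin 2) (Fin 2) ℂ).mulVec x
      = Complex.I • (x - (2 * herm x q / herm q q) • q)

def Gsub (n : ℕ) : Subgroup (H n) :=
  Subgroup.closure {x : H n | ∃ i j : ZMod n, x = r n i * r n j}

lemma rr_mem (n : ℕ) (i j : ZMod n) : r n i * r n j ∈ Gsub n :=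
  Subgroup.subset_closure ⟨i, j, rfl⟩

lemma rrrr_mem (n : ℕ) (i j k l : ZMod n) :
    r n i * r n j * r n k * r n l ∈ Gsub n := by
  have h : r n i * r n j * r n k * r n l = (r n i * r n j) * (r n k * r n l) := by
    rw [mul_assoc]
  rw [h]
  exact mul_mem (rr_mem n i j) (rr_mem n k l)

def v (n : ℕ) (k : ℕ) : H n :=
  (((List.range (k % n)).map (fun m => r n ((m + 1 : ℕ) : ZMod n))).reverse).prod

def w0 (n : ℕ) (i : ℕ) : H n := if Even i then v n i else v n i * r n 0

def w (n : ℕ) (j : ℕ) : H n :=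
  if j % (2 * n - 2) ≤ n - 2 then w0 n (j % (2 * n - 2))
  else r n 0 * w0 n (j % (2 * n - 2) - (n - 1)) * r n 0

def IsLiftGW {n : ℕ} (ρ : ↥(Gsub n) →* PU11) (u : ℕ → H n) (B : ℕ → SU11) : Prop :=
  ∀ (j : ℕ) (h : u j ∈ Gsub n), (QuotientGroup.mk (B j) : PU11) = ρ ⟨u j, h⟩

def areaG (n : ℕ) (B : ℕ → SU11) (c p q : W) : ℝ :=
  ∑ j ∈ Finset.range (2 * n - 2),
    triArea c
      (((B j : SpecialLinearGroup (Fin 2) ℂ) : Matrix (Fin 2) (Fin 2) ℂ).mulVec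
        (if Even j then p else q))
      (((B ((j + 1) % (2 * n - 2)) : SpecialLinearGroup (Fin 2) ℂ)
          : Matrix (Fin 2) (Fin 2) ℂ).mulVec
        (if Even ((j + 1) % (2 * n - 2)) then p else q))

def HasAreaG {n : ℕ} (ρ : ↥(Gsub n) →* PU11) (a : ℝ) : Prop :=
  ∀ B : ℕ → SU11, IsLiftGW ρ (w n) B →
    ∀ c p q : W, IsNeg c → IsNeg p → IsNeg q → areaG n B c p q = a

def bigCycle (n : ℕ) (s t s' t' : ZMod n → ℂ) (wd : ℕ → ℂ) : List ℂ :=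
  [t 1, s 2, wd 2] ++
  ((List.range (n - 4)).map
    (fun k => [s ((k + 3 : ℕ) : ZMod n), t ((k + 3 : ℕ) : ZMod n), wd (k + 3)])).flatten ++
  [t ((n - 1 : ℕ) : ZMod n), s ((n : ℕ) : ZMod n)] ++
  [s' 2, wd (n + 1)] ++
  ((List.range (n - 4)).map
    (fun k => [s' ((k + 3 : ℕ) : ZMod n), t' ((k + 3 : ℕ) : ZMod n), wd (n + k + 2)])).flatten ++
  [t' ((n - 1 : ℕ) : ZMod n)]

def IsSE {n : ℕ} (ρ ρ' : H n →* PU11) (i : ZMod n) (t : ℝ) : Prop :=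
  IsHyperbolic (ρ (r n i * r n (i - 1))) ∧
  ∃ φ : ℝ → PU11, Continuous φ ∧ (∀ s u : ℝ, φ (s + u) = φ s * φ u) ∧
    IsHyperbolic (φ 1) ∧ φ 1 * φ 1 = ρ (r n i * r n (i - 1)) ∧
    (∀ j : ZMod n, j ≠ i - 1 → j ≠ i → ρ' (r n j) = ρ (r n j)) ∧
    ρ' (r n (i - 1)) = φ t * ρ (r n (i - 1)) * (φ t)⁻¹ ∧
    ρ' (r n i) = φ t * ρ (r n i) * (φ t)⁻¹

def ConjRep {n : ℕ} (ρ ρ' : H n →* PU11) : Prop :=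
  ∃ g : PU11, ∀ h : H n, ρ' h = g * ρ h * g⁻¹

def NormalizedAt {n : ℕ} (ρ : H n →* PU11) (i : ZMod n) : Prop :=
  IsRepeller (ρ (r n i * r n (i - 1))) (-1) ∧
  IsAttractor (ρ (r n i * r n (i - 1))) 1 ∧
  pact (ρ (r n i)) 0 = 0

def PPlus {n : ℕ} (ρ : H n →* PU11) : Prop :=
  Function.Injective ρ ∧ DiscreteTopology (MonoidHom.range ρ) ∧
  HasArea ρ (((n : ℝ) - 4) * Real.pi)

def tupleAt {n : ℕ} (ρ : H n →* PU11) (i : ZMod n) : List ℂ :=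
  (iCycle ρ i (-1) 1).drop 2

def KPlusL (n : ℕ) (l : List ℂ) : Prop :=
  l.length = 2 * n - 6 ∧ (∀ z ∈ l, ‖z‖ = 1 ∧ 0 < z.im) ∧ IsPositiveCycle l

def PrelsList (n : ℕ) : Set (FreeGroup (ZMod n)) :=
  { ((List.range n).map (fun k => FreeGroup.of ((n - k : ℕ) : ZMod n))).prod,
    ((List.range (n / 2)).map (fun k => FreeGroup.of ((n - 2 * k : ℕ) : ZMod n))).prod,
    ((List.range (n / 2)).map (fun k => FreeGroup.of ((n - 1 - 2 * k : ℕ) : ZMod n))).prod }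

abbrev Pgrp (n : ℕ) := PresentedGroup (PrelsList n)

def gp (n : ℕ) (i : ZMod n) : Pgrp n := PresentedGroup.of i


/-! ### Auxiliary material for the surface group presentation -/

section SGPAux

lemma mk_rel_one {α : Type} (rels : Set (FreeGroup α)) {x : FreeGroup α} (h : x ∈ rels) :
    PresentedGroup.mk rels x = 1 :=
  (QuotientGroup.eq_one_iff x).mpr (Subgroup.subset_normalClosure h)

lemma r_sq (n : ℕ) (i : ZMod n) : r n i * r n i = 1 := by
  have h := mk_rel_one (Hrels n) (Set.mem_union_left _ ⟨i, rfl⟩)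
  rw [_root_.map_mul] at h
  exact h

lemma r_inv (n : ℕ) (i : ZMod n) : (r n i)⁻¹ = r n i :=
  inv_eq_of_mul_eq_one_right (r_sq n i)

lemma prod_range_peel {M : Type*} [Monoid M] (f : ℕ → M) (m : ℕ) :
    ((List.range (m + 1)).map f).prod = f 0 * ((List.range m).map (fun k => f (k + 1))).prod := by
  rw [List.range_succ_eq_map, List.map_cons, List.prod_cons, List.map_map]
  rfl

lemma prod_range_last {M : Type*} [Monoid M] (f : ℕ → M) (m : ℕ) :
    ((List.range (m + 1)).map f).prod = ((List.range m).map f).prod * f m := by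
  rw [List.range_succ, List.map_append, List.prod_append]; simp

lemma prod_map_congr {M : Type*} [Monoid M] {f g : ℕ → M} (h : ∀ k, f k = g k) (l : List ℕ) :
    (l.map f).prod = (l.map g).prod := by rw [funext h]

lemma prod_map_congr_mem {M : Type*} [Monoid M] {f g : ℕ → M} (m : ℕ)
    (h : ∀ k < m, f k = g k) :
    ((List.range m).map f).prod = ((List.range m).map g).prod := by
  rw [List.map_congr_left (fun a ha => h a (List.mem_range.mp ha))]

lemma prod_range_pair {M : Type*} [Monoid M] (f : ℕ → M) :
    ∀ m : ℕ, ((List.range (2 * m)).map f).prod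
      = ((List.range m).map (fun k => f (2 * k) * f (2 * k + 1))).prod
  | 0 => rfl
  | (m + 1) => by
    have h2 : 2 * (m + 1) = (2 * m + 1) + 1 := by ring
    rw [h2, prod_range_last, prod_range_last, prod_range_last, prod_range_pair f m, mul_assoc]

lemma prod_reverse_range {M : Type*} [Monoid M] (f : ℕ → M) :
    ∀ m : ℕ, (((List.range m).map f).reverse).prod
      = ((List.range m).map (fun k => f (m - 1 - k))).prod
  | 0 => rfl
  | (m + 1) => by
    have hL : (((List.range (m + 1)).map f).reverse).prod
        = f m * (((List.range m).map f).reverse).prod := by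
      rw [List.range_succ, List.map_append, List.reverse_append]
      simp
    rw [hL, prod_reverse_range f m, prod_range_peel]
    simp only [Nat.add_sub_cancel, Nat.sub_zero]
    exact congrArg (f m * ·) (prod_map_congr (fun k => by rw [show m - (k + 1) = m - 1 - k by omega]) _)

lemma longprod_eq_one (n : ℕ) :
    ((List.range n).map (fun k => r n ((n - k : ℕ) : ZMod n))).prod = 1 := by
  have h := mk_rel_one (Hrels n) (Set.mem_union_right _ rfl)
  rw [longRel, map_list_prod, List.map_reverse, List.map_map] at h
  have h2 : ((((List.range n).map
      (fun k => PresentedGroup.mk (Hrels n) (FreeGroup.of ((k + 1 : ℕ) : ZMod n)))).reverse)).prod = 1 := h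
  rw [prod_reverse_range (fun k => PresentedGroup.mk (Hrels n) (FreeGroup.of ((k + 1 : ℕ) : ZMod n))) n] at h2
  rw [prod_map_congr_mem n (g := fun k => PresentedGroup.mk (Hrels n) (FreeGroup.of ((n - k : ℕ) : ZMod n)))
    (fun k hk => by rw [show n - 1 - k + 1 = n - k by omega])] at h2
  exact h2

/-- Telescoping products in `H n`. -/
lemma tele_prod (n : ℕ) (hn : 6 ≤ n) :
    ∀ m, m ≤ n →
      ((List.range m).map
        (fun k => r n ((n - k : ℕ) : ZMod n) * r n (((n - k : ℕ) : ZMod n) - 1))).prod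
        = r n ((n : ℕ) : ZMod n) * r n ((n - m : ℕ) : ZMod n)
  | 0, _ => by
    simp only [List.range_zero, List.map_nil, List.prod_nil, Nat.sub_zero]
    exact (r_sq n _).symm
  | (m + 1), h => by
    rw [prod_range_last, tele_prod n hn m (by omega)]
    have hc : ((n - m : ℕ) : ZMod n) - 1 = ((n - (m + 1) : ℕ) : ZMod n) := by
      rw [Nat.cast_sub (show m ≤ n by omega), Nat.cast_sub (show m + 1 ≤ n by omega)]
      push_cast
      ring
    rw [hc]
    calc r n ((n : ℕ) : ZMod n) * r n ((n - m : ℕ) : ZMod n) *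
          (r n ((n - m : ℕ) : ZMod n) * r n ((n - (m + 1) : ℕ) : ZMod n))
        = r n ((n : ℕ) : ZMod n) * ((r n ((n - m : ℕ) : ZMod n) * r n ((n - m : ℕ) : ZMod n)) *
            r n ((n - (m + 1) : ℕ) : ZMod n)) := by
          rw [mul_assoc, mul_assoc]
      _ = r n ((n : ℕ) : ZMod n) * r n ((n - (m + 1) : ℕ) : ZMod n) := by
          rw [r_sq, one_mul]

/-- The relators of `Pgrp n` are satisfied in `H n` by `i ↦ r i * r (i-1)`. -/
lemma phi_rels (n : ℕ) (hn : 6 ≤ n) (hmod : n % 2 = 0) :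
    ∀ rel ∈ PrelsList n,
      FreeGroup.lift (fun i : ZMod n => r n i * r n (i - 1)) rel = 1 := by
  have hlift : ∀ (m : ℕ) (g : ℕ → ZMod n),
      FreeGroup.lift (fun i : ZMod n => r n i * r n (i - 1))
        (((List.range m).map (fun k => FreeGroup.of (g k))).prod)
      = ((List.range m).map (fun k => r n (g k) * r n (g k - 1))).prod := by
    intro m g
    rw [map_list_prod, List.map_map]
    exact prod_map_congr (fun k => FreeGroup.lift_apply_of) _
  rintro rel (rfl | rfl | rfl)
  · rw [hlift]
    rw [tele_prod n hn n le_rfl]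
    rw [Nat.sub_self, Nat.cast_zero, ZMod.natCast_self]
    exact r_sq n 0
  · rw [hlift]
    rw [prod_map_congr_mem (n / 2)
      (g := fun k => r n ((n - 2 * k : ℕ) : ZMod n) * r n ((n - (2 * k + 1) : ℕ) : ZMod n))
      (fun k hk => by
        have h1 : 1 ≤ n - 2 * k := by omega
        have hc : ((n - 2 * k : ℕ) : ZMod n) - 1 = ((n - (2 * k + 1) : ℕ) : ZMod n) := by
          rw [Nat.cast_sub (by omega : 2 * k ≤ n), Nat.cast_sub (by omega : 2 * k + 1 ≤ n)]
          push_cast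
          ring
        rw [hc])]
    rw [← prod_range_pair (fun j => r n ((n - j : ℕ) : ZMod n)) (n / 2),
      show 2 * (n / 2) = n by omega]
    exact longprod_eq_one n
  · rw [hlift]
    rw [prod_map_congr_mem (n / 2)
      (g := fun k => r n ((n - 1 - 2 * k : ℕ) : ZMod n) * r n ((n - 1 - (2 * k + 1) : ℕ) : ZMod n))
      (fun k hk => by
        have h1 : 1 ≤ n - 1 - 2 * k := by omega
        have hc : ((n - 1 - 2 * k : ℕ) : ZMod n) - 1 = ((n - 1 - (2 * k + 1) : ℕ) : ZMod n) := by
          rw [show n - 1 - (2 * k + 1) = (n - 1 - 2 * k) - 1 by omega,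
            Nat.cast_sub (by omega : 1 ≤ n - 1 - 2 * k), Nat.cast_one]
        rw [hc])]
    rw [← prod_range_pair (fun j => r n ((n - 1 - j : ℕ) : ZMod n)) (n / 2),
      show 2 * (n / 2) = n by omega]
    -- remaining : ((range n).map (fun j => r n (n-1-j))).prod = 1
    have hsplit : ((List.range n).map (fun j => r n ((n - 1 - j : ℕ) : ZMod n))).prod
        = ((List.range (n - 1)).map (fun j => r n ((n - 1 - j : ℕ) : ZMod n))).prod * r n 0 := by
      have e : ((List.range n).map (fun j => r n ((n - 1 - j : ℕ) : ZMod n))).prod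
          = ((List.range ((n - 1) + 1)).map (fun j => r n ((n - 1 - j : ℕ) : ZMod n))).prod := by
        rw [show (n - 1) + 1 = n by omega]
      rw [e, prod_range_last]
      rw [show n - 1 - (n - 1) = 0 by omega, Nat.cast_zero]
    have hlong : r n 0 * ((List.range (n - 1)).map (fun j => r n ((n - 1 - j : ℕ) : ZMod n))).prod = 1 := by
      have e : ((List.range n).map (fun k => r n ((n - k : ℕ) : ZMod n))).prod
          = ((List.range ((n - 1) + 1)).map (fun k => r n ((n - k : ℕ) : ZMod n))).prod := by
        rw [show (n - 1) + 1 = n by omega]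
      have h := longprod_eq_one n
      rw [e, prod_range_peel] at h
      simp only [Nat.sub_zero] at h
      rw [ZMod.natCast_self] at h
      rw [prod_map_congr_mem (n - 1)
        (g := fun j => r n ((n - 1 - j : ℕ) : ZMod n))
        (fun k hk => by rw [show n - (k + 1) = n - 1 - k by omega])] at h
      exact h
    have hT : ((List.range (n - 1)).map (fun j => r n ((n - 1 - j : ℕ) : ZMod n))).prod = r n 0 := by
      have := inv_eq_of_mul_eq_one_right hlong
      rw [r_inv] at this
      exact this.symm
    rw [hsplit, hT]
    exact r_sq n 0

/-! #### The coset action of `H n` on `Pgrp n × Bool` -/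

def aaP (n : ℕ) : ℕ → Pgrp n
  | 0 => 1
  | (m + 1) => gp n ((m + 1 : ℕ) : ZMod n) * aaP n m

lemma aaP_succ (n m : ℕ) : aaP n (m + 1) = gp n ((m + 1 : ℕ) : ZMod n) * aaP n m := rfl

def AfP (n : ℕ) (i : ZMod n) : Pgrp n := aaP n i.val

def sigP (n : ℕ) (i : ZMod n) : Equiv.Perm (Pgrp n × Bool) where
  toFun x := ((cond x.2 (AfP n i) (AfP n i)⁻¹) * x.1, !x.2)
  invFun x := ((cond x.2 (AfP n i) (AfP n i)⁻¹) * x.1, !x.2)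
  left_inv := by rintro ⟨p, b⟩; cases b <;> simp
  right_inv := by rintro ⟨p, b⟩; cases b <;> simp

lemma sigP_apply_false (n : ℕ) (i : ZMod n) (p : Pgrp n) :
    sigP n i (p, false) = ((AfP n i)⁻¹ * p, true) := rfl

lemma sigP_apply_true (n : ℕ) (i : ZMod n) (p : Pgrp n) :
    sigP n i (p, true) = (AfP n i * p, false) := rfl

def xsP (n : ℕ) : ℕ → Pgrp n
  | 0 => 1
  | (m + 1) =>
    (if Even m then (AfP n ((m + 1 : ℕ) : ZMod n))⁻¹ else AfP n ((m + 1 : ℕ) : ZMod n)) * xsP n m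

def ysP (n : ℕ) : ℕ → Pgrp n
  | 0 => 1
  | (m + 1) =>
    (if Even m then AfP n ((m + 1 : ℕ) : ZMod n) else (AfP n ((m + 1 : ℕ) : ZMod n))⁻¹) * ysP n m

lemma xsP_succ (n m : ℕ) : xsP n (m + 1) =
    (if Even m then (AfP n ((m + 1 : ℕ) : ZMod n))⁻¹ else AfP n ((m + 1 : ℕ) : ZMod n)) * xsP n m := rfl

lemma ysP_succ (n m : ℕ) : ysP n (m + 1) =
    (if Even m then AfP n ((m + 1 : ℕ) : ZMod n) else (AfP n ((m + 1 : ℕ) : ZMod n))⁻¹) * ysP n m := rfl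

lemma perm_eval (n : ℕ) : ∀ (m : ℕ) (p : Pgrp n),
    ((((List.range m).map (fun k => sigP n ((k + 1 : ℕ) : ZMod n))).reverse).prod) (p, false)
      = (xsP n m * p, if Even m then false else true) ∧
    ((((List.range m).map (fun k => sigP n ((k + 1 : ℕ) : ZMod n))).reverse).prod) (p, true)
      = (ysP n m * p, if Even m then true else false)
  | 0, p => by
    constructor <;> simp [xsP, ysP]
  | (m + 1), p => by
    have hL : (((List.range (m + 1)).map (fun k => sigP n ((k + 1 : ℕ) : ZMod n))).reverse).prod
        = sigP n ((m + 1 : ℕ) : ZMod n) *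
          (((List.range m).map (fun k => sigP n ((k + 1 : ℕ) : ZMod n))).reverse).prod := by
      rw [List.range_succ, List.map_append, List.reverse_append]
      simp
    obtain ⟨h1, h2⟩ := perm_eval n m p
    by_cases he : Even m
    · have ho : ¬ Even (m + 1) := by simp [Nat.even_add_one, he]
      constructor
      · rw [hL, Equiv.Perm.mul_apply, h1, if_pos he, sigP_apply_false, if_neg ho,
          xsP_succ, if_pos he, mul_assoc]
      · rw [hL, Equiv.Perm.mul_apply, h2, if_pos he, sigP_apply_true, if_neg ho,
          ysP_succ, if_pos he, mul_assoc]
    · have ho : Even (m + 1) := Nat.even_add_one.mpr he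
      constructor
      · rw [hL, Equiv.Perm.mul_apply, h1, if_neg he, sigP_apply_true, if_pos ho,
          xsP_succ, if_neg he, mul_assoc]
      · rw [hL, Equiv.Perm.mul_apply, h2, if_neg he, sigP_apply_false, if_pos ho,
          ysP_succ, if_neg he, mul_assoc]

lemma gp_rel1 (n : ℕ) :
    ((List.range n).map (fun k => gp n ((n - k : ℕ) : ZMod n))).prod = 1 := by
  have h := mk_rel_one (PrelsList n) (Set.mem_insert _ _)
  rw [map_list_prod, List.map_map] at h
  exact h

lemma gp_rel2 (n : ℕ) :
    ((List.range (n / 2)).map (fun k => gp n ((n - 2 * k : ℕ) : ZMod n))).prod = 1 := by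
  have h := mk_rel_one (PrelsList n) (Set.mem_insert_iff.mpr (Or.inr (Set.mem_insert _ _)))
  rw [map_list_prod, List.map_map] at h
  exact h

lemma gp_rel3 (n : ℕ) :
    ((List.range (n / 2)).map (fun k => gp n ((n - 1 - 2 * k : ℕ) : ZMod n))).prod = 1 := by
  have h := mk_rel_one (PrelsList n)
    (Set.mem_insert_iff.mpr (Or.inr (Set.mem_insert_iff.mpr (Or.inr rfl))))
  rw [map_list_prod, List.map_map] at h
  exact h

lemma aaP_prod (n : ℕ) :
    ∀ m, aaP n m = ((List.range m).map (fun k => gp n ((m - k : ℕ) : ZMod n))).prod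
  | 0 => rfl
  | (m + 1) => by
    rw [prod_range_peel]
    simp only [Nat.sub_zero]
    rw [prod_map_congr (f := fun k => gp n ((m + 1 - (k + 1) : ℕ) : ZMod n))
      (g := fun k => gp n ((m - k : ℕ) : ZMod n))
      (fun k => congrArg (fun t : ℕ => gp n ((t : ℕ) : ZMod n))
        (show m + 1 - (k + 1) = m - k by omega)) _]
    rw [aaP_succ, aaP_prod n m]

lemma aaP_pred (n : ℕ) (hn : 2 ≤ n) : gp n 0 * aaP n (n - 1) = 1 := by
  have h := gp_rel1 n
  have e : ((List.range n).map (fun k => gp n ((n - k : ℕ) : ZMod n))).prod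
      = ((List.range ((n - 1) + 1)).map (fun k => gp n ((n - k : ℕ) : ZMod n))).prod := by
    rw [show (n - 1) + 1 = n by omega]
  rw [e, prod_range_peel] at h
  simp only [Nat.sub_zero] at h
  rw [ZMod.natCast_self] at h
  rw [prod_map_congr (f := fun k => gp n ((n - (k + 1) : ℕ) : ZMod n))
    (g := fun k => gp n ((n - 1 - k : ℕ) : ZMod n))
    (fun k => congrArg (fun t : ℕ => gp n ((t : ℕ) : ZMod n))
      (show n - (k + 1) = n - 1 - k by omega)) _] at h
  rw [← aaP_prod n (n - 1)] at h
  exact h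

lemma aaP_top (n : ℕ) (hn : 2 ≤ n) : aaP n (n - 1) = (gp n 0)⁻¹ :=
  (inv_eq_of_mul_eq_one_right (aaP_pred n hn)).symm

lemma AfP_cast (n : ℕ) {m : ℕ} (h : m < n) : AfP n ((m : ℕ) : ZMod n) = aaP n m := by
  unfold AfP
  rw [ZMod.val_natCast_of_lt h]

lemma AfP_n (n : ℕ) (hn : 1 ≤ n) : AfP n ((n : ℕ) : ZMod n) = 1 := by
  unfold AfP
  rw [ZMod.natCast_self, ZMod.val_zero]
  rfl

lemma xsP_even (n : ℕ) (hn : 6 ≤ n) :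
    ∀ j : ℕ, 2 * j + 2 ≤ n →
      xsP n (2 * j) = ((List.range j).map (fun k => gp n ((2 * j - 2 * k : ℕ) : ZMod n))).prod
  | 0, _ => by simp [xsP]
  | (j + 1), h => by
    have h1 : ¬ Even (2 * j + 1) := by
      rw [Nat.even_iff]; omega
    have h2 : Even (2 * j) := even_two_mul j
    have hx : xsP n (2 * j + 2) = gp n ((2 * j + 2 : ℕ) : ZMod n) * xsP n (2 * j) := by
      rw [show 2 * j + 2 = (2 * j + 1) + 1 by omega, xsP_succ, if_neg h1,
        show (2 * j + 1) + 1 = 2 * j + 2 by omega, xsP_succ, if_pos h2]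
      rw [AfP_cast n (show 2 * j + 2 < n by omega), AfP_cast n (show 2 * j + 1 < n by omega)]
      rw [show 2 * j + 2 = (2 * j + 1) + 1 by omega, aaP_succ,
        show (2 * j + 1) + 1 = 2 * j + 2 by omega]
      rw [mul_assoc, mul_inv_cancel_left]
    rw [show 2 * (j + 1) = 2 * j + 2 by ring, hx, xsP_even n hn j (by omega),
      prod_range_peel (fun k => gp n ((2 * j + 2 - 2 * k : ℕ) : ZMod n)) j]
    simp only [Nat.mul_zero, Nat.sub_zero]
    rw [prod_map_congr (f := fun k => gp n ((2 * j + 2 - 2 * (k + 1) : ℕ) : ZMod n))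
      (g := fun k => gp n ((2 * j - 2 * k : ℕ) : ZMod n))
      (fun k => congrArg (fun t : ℕ => gp n ((t : ℕ) : ZMod n))
        (show 2 * j + 2 - 2 * (k + 1) = 2 * j - 2 * k by omega)) _]

lemma ysP_odd (n : ℕ) (hn : 6 ≤ n) :
    ∀ j : ℕ, 2 * j + 2 ≤ n →
      ysP n (2 * j + 1)
        = ((List.range (j + 1)).map (fun k => gp n ((2 * j + 1 - 2 * k : ℕ) : ZMod n))).prod
  | 0, _ => by
    rw [show 2 * 0 + 1 = 0 + 1 by norm_num, ysP_succ, if_pos (Even.zero)]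
    rw [AfP_cast n (show 0 + 1 < n by omega)]
    rw [aaP_succ]
    simp [aaP, ysP, List.range_succ]
  | (j + 1), h => by
    have h1 : ¬ Even (2 * j + 1) := by rw [Nat.even_iff]; omega
    have h2 : Even (2 * j + 2) := by rw [Nat.even_iff]; omega
    have hy : ysP n (2 * j + 3) = gp n ((2 * j + 3 : ℕ) : ZMod n) * ysP n (2 * j + 1) := by
      rw [show 2 * j + 3 = (2 * j + 2) + 1 by omega, ysP_succ, if_pos h2,
        show (2 * j + 2) + 1 = 2 * j + 3 by omega,
        show 2 * j + 2 = (2 * j + 1) + 1 by omega, ysP_succ, if_neg h1,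
        show (2 * j + 1) + 1 = 2 * j + 2 by omega]
      rw [AfP_cast n (show 2 * j + 3 < n by omega), AfP_cast n (show 2 * j + 2 < n by omega)]
      rw [show 2 * j + 3 = (2 * j + 2) + 1 by omega, aaP_succ,
        show (2 * j + 2) + 1 = 2 * j + 3 by omega]
      rw [mul_assoc, mul_inv_cancel_left]
    rw [show 2 * (j + 1) + 1 = 2 * j + 3 by ring, hy, ysP_odd n hn j (by omega),
      prod_range_peel (fun k => gp n ((2 * j + 3 - 2 * k : ℕ) : ZMod n)) (j + 1)]
    simp only [Nat.mul_zero, Nat.sub_zero]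
    rw [prod_map_congr (f := fun k => gp n ((2 * j + 3 - 2 * (k + 1) : ℕ) : ZMod n))
      (g := fun k => gp n ((2 * j + 1 - 2 * k : ℕ) : ZMod n))
      (fun k => congrArg (fun t : ℕ => gp n ((t : ℕ) : ZMod n))
        (show 2 * j + 3 - 2 * (k + 1) = 2 * j + 1 - 2 * k by omega)) _]

lemma xsP_n (n : ℕ) (hn : 6 ≤ n) (hmod : n % 2 = 0) : xsP n n = 1 := by
  have hx2 : xsP n (n - 2)
      = ((List.range (n / 2 - 1)).map
          (fun k => gp n ((2 * (n / 2 - 1) - 2 * k : ℕ) : ZMod n))).prod := by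
    rw [show n - 2 = 2 * (n / 2 - 1) by omega]
    exact xsP_even n hn (n / 2 - 1) (by omega)
  have hr2 := gp_rel2 n
  have e : ((List.range (n / 2)).map (fun k => gp n ((n - 2 * k : ℕ) : ZMod n))).prod
      = ((List.range ((n / 2 - 1) + 1)).map (fun k => gp n ((n - 2 * k : ℕ) : ZMod n))).prod := by
    rw [show (n / 2 - 1) + 1 = n / 2 by omega]
  rw [e, prod_range_peel] at hr2
  simp only [Nat.mul_zero, Nat.sub_zero] at hr2
  rw [ZMod.natCast_self] at hr2
  rw [prod_map_congr (f := fun k => gp n ((n - 2 * (k + 1) : ℕ) : ZMod n))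
    (g := fun k => gp n ((2 * (n / 2 - 1) - 2 * k : ℕ) : ZMod n))
    (fun k => congrArg (fun t : ℕ => gp n ((t : ℕ) : ZMod n))
      (show n - 2 * (k + 1) = 2 * (n / 2 - 1) - 2 * k by omega)) _] at hr2
  have hx2' : xsP n (n - 2) = (gp n 0)⁻¹ := by
    rw [hx2]
    exact (inv_eq_of_mul_eq_one_right hr2).symm
  have hev : Even (n - 2) := by rw [Nat.even_iff]; omega
  have hx1 : xsP n (n - 1) = 1 := by
    have e1 : xsP n (n - 1) = xsP n ((n - 2) + 1) := by rw [show (n - 2) + 1 = n - 1 by omega]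
    rw [e1, xsP_succ, if_pos hev, show (n - 2) + 1 = n - 1 by omega]
    rw [AfP_cast n (show n - 1 < n by omega), aaP_top n (by omega), hx2', inv_inv,
      mul_inv_cancel]
  have hodd : ¬ Even (n - 1) := by rw [Nat.even_iff]; omega
  have e2 : xsP n n = xsP n ((n - 1) + 1) := by rw [show (n - 1) + 1 = n by omega]
  rw [e2, xsP_succ, if_neg hodd, hx1, mul_one, show (n - 1) + 1 = n by omega]
  exact AfP_n n (by omega)

lemma ysP_n (n : ℕ) (hn : 6 ≤ n) (hmod : n % 2 = 0) : ysP n n = 1 := by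
  have hy1 : ysP n (n - 1) = 1 := by
    have h := ysP_odd n hn (n / 2 - 1) (by omega)
    rw [show 2 * (n / 2 - 1) + 1 = n - 1 by omega, show (n / 2 - 1) + 1 = n / 2 by omega] at h
    rw [h]
    exact gp_rel3 n
  have hodd : ¬ Even (n - 1) := by rw [Nat.even_iff]; omega
  have e2 : ysP n n = ysP n ((n - 1) + 1) := by rw [show (n - 1) + 1 = n by omega]
  rw [e2, ysP_succ, if_neg hodd, hy1, mul_one, show (n - 1) + 1 = n by omega]
  rw [AfP_n n (by omega)]
  exact inv_one

/-- The relators of `H n` act trivially through `sigP`. -/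
lemma sig_rels (n : ℕ) (hn : 6 ≤ n) (hmod : n % 2 = 0) :
    ∀ rel ∈ Hrels n, FreeGroup.lift (sigP n) rel = 1 := by
  rintro rel (⟨i, rfl⟩ | rfl)
  · rw [_root_.map_mul, FreeGroup.lift_apply_of]
    apply Equiv.ext
    rintro ⟨p, b⟩
    cases b
    · rw [Equiv.Perm.mul_apply, sigP_apply_false, sigP_apply_true, mul_inv_cancel_left]
      rfl
    · rw [Equiv.Perm.mul_apply, sigP_apply_true, sigP_apply_false, inv_mul_cancel_left]
      rfl
  · rw [longRel, map_list_prod, List.map_reverse, List.map_map]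
    have hmap : (List.range n).map
          ((FreeGroup.lift (sigP n)) ∘ (fun k => FreeGroup.of ((k + 1 : ℕ) : ZMod n)))
        = (List.range n).map (fun k => sigP n ((k + 1 : ℕ) : ZMod n)) := by
      apply List.map_congr_left
      intro a _
      exact FreeGroup.lift_apply_of
    rw [hmap]
    apply Equiv.ext
    rintro ⟨p, b⟩
    have heq := perm_eval n n p
    have hev : Even n := by rw [Nat.even_iff]; omega
    cases b
    · rw [heq.1, if_pos hev, xsP_n n hn hmod, one_mul]
      rfl
    · rw [heq.2, if_pos hev, ysP_n n hn hmod, one_mul]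
      rfl

lemma AfP_mul_inv (n : ℕ) (hn : 6 ≤ n) (i : ZMod n) :
    AfP n i * (AfP n (i - 1))⁻¹ = gp n i := by
  haveI : NeZero n := ⟨by omega⟩
  by_cases h0 : i = 0
  · subst h0
    have h1 : (0 - 1 : ZMod n) = ((n - 1 : ℕ) : ZMod n) := by
      rw [Nat.cast_sub (by omega : 1 ≤ n), ZMod.natCast_self, Nat.cast_one]
    have h2 : AfP n (0 : ZMod n) = 1 := by
      unfold AfP
      rw [ZMod.val_zero]
      rfl
    rw [h1, AfP_cast n (show n - 1 < n by omega), aaP_top n (by omega), h2, inv_inv, one_mul]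
  · have hv : i.val ≠ 0 := fun hh => h0 ((ZMod.val_eq_zero i).mp hh)
    have hi : ((i.val : ℕ) : ZMod n) = i := ZMod.natCast_rightInverse i
    set m := i.val - 1 with hm
    have hval : i.val = m + 1 := by omega
    have h1 : i - 1 = ((m : ℕ) : ZMod n) := by
      rw [← hi, hval]
      rw [Nat.cast_add, Nat.cast_one]
      ring
    have h2 : AfP n (i - 1) = aaP n m := by
      rw [h1, AfP_cast n (show m < n by have := ZMod.val_lt i; omega)]
    have h3 : AfP n i = gp n i * aaP n m := by
      unfold AfP
      rw [hval, aaP_succ, ← hval, hi]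
    rw [h2, h3, mul_inv_cancel_right]

end SGPAux

/-- the presented group `P` on the generators `g_{i(i-1)}` maps onto
`G_n ≤ H_n` by `g_{i(i-1)} ↦ r_i r_{i-1}`, isomorphically. -/
theorem surface_group_presentation (n : ℕ) (hn : 6 ≤ n) (heven : Even n) :
    (∃ φ : Pgrp n →* H n, ∀ i : ZMod n, φ (gp n i) = r n i * r n (i - 1)) ∧
    (∀ φ : Pgrp n →* H n, (∀ i : ZMod n, φ (gp n i) = r n i * r n (i - 1)) →
      Function.Injective φ ∧ MonoidHom.range φ = Gsub n) := by
  haveI : NeZero n := ⟨by omega⟩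
  have hmod : n % 2 = 0 := Nat.even_iff.mp heven
  constructor
  · -- existence of φ
    refine ⟨PresentedGroup.toGroup (phi_rels n hn hmod), fun i => ?_⟩
    exact PresentedGroup.toGroup.of (phi_rels n hn hmod)
  · intro φ hφ
    -- the coset action ρ : H n →* Perm (Pgrp n × Bool)
    set ρ : H n →* Equiv.Perm (Pgrp n × Bool) := PresentedGroup.toGroup (sig_rels n hn hmod)
      with hρdef
    have hρr : ∀ i : ZMod n, ρ (r n i) = sigP n i := fun i =>
      PresentedGroup.toGroup.of (sig_rels n hn hmod)
    -- ρ ∘ φ acts by left multiplication on the `false` sector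
    have hgen : ∀ i : ZMod n, ∀ p : Pgrp n,
        (ρ (φ (gp n i))) (p, false) = (gp n i * p, false) := by
      intro i p
      rw [hφ i, _root_.map_mul, hρr, hρr, Equiv.Perm.mul_apply, sigP_apply_false, sigP_apply_true,
        ← mul_assoc, AfP_mul_inv n hn i]
    have hall : ∀ x : Pgrp n, ∀ p : Pgrp n,
        (ρ (φ x)) (p, false) = (x * p, false) := by
      let S : Subgroup (Pgrp n) :=
      { carrier := {x : Pgrp n | ∀ p : Pgrp n, (ρ (φ x)) (p, false) = (x * p, false)}
        one_mem' := by
          intro p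
          simp
        mul_mem' := by
          intro a b ha hb p
          rw [_root_.map_mul, _root_.map_mul, Equiv.Perm.mul_apply, hb p, ha (b * p), mul_assoc]
        inv_mem' := by
          intro a ha p
          have h1 : (ρ (φ a)) (a⁻¹ * p, false) = (p, false) := by
            rw [ha (a⁻¹ * p), mul_inv_cancel_left]
          have h2 : (ρ (φ a⁻¹)) = (ρ (φ a))⁻¹ := by rw [_root_.map_inv, _root_.map_inv]
          rw [h2, Equiv.Perm.inv_eq_iff_eq]
          exact h1.symm }
      intro x
      exact PresentedGroup.generated_by (PrelsList n) S (fun j => hgen j) x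
    constructor
    · -- injectivity
      intro a b hab
      have ha := hall a 1
      have hb := hall b 1
      rw [hab, hb] at ha
      have h3 := congrArg Prod.fst ha
      simpa using h3.symm
    · -- range
      apply le_antisymm
      · rintro x ⟨y, rfl⟩
        exact PresentedGroup.generated_by (PrelsList n) ((Gsub n).comap φ)
          (fun j => by
            have : φ (gp n j) ∈ Gsub n := by
              rw [hφ j]; exact rr_mem n j (j - 1)
            exact this) y
      · rw [Gsub]
        rw [Subgroup.closure_le]
        rintro x ⟨i, j, rfl⟩
        have key : ∀ k : ℕ, ∀ i : ZMod n, r n i * r n (i - (k : ℕ)) ∈ MonoidHom.range φ := by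
          intro k
          induction k with
          | zero =>
            intro i
            simp only [Nat.cast_zero, sub_zero]
            rw [r_sq n i]
            exact one_mem _
          | succ k ih =>
            intro i
            have hstep : r n i * r n (i - ((k + 1 : ℕ) : ZMod n))
                = (r n i * r n (i - (k : ℕ))) * (r n (i - (k : ℕ)) * r n (i - (k : ℕ) - 1)) := by
              have hc : i - ((k + 1 : ℕ) : ZMod n) = i - (k : ℕ) - 1 := by
                push_cast
                ring
              rw [hc, mul_assoc, ← mul_assoc (r n (i - (k : ℕ))), r_sq, one_mul]
            rw [hstep]
            exact mul_mem (ih i) ⟨gp n (i - (k : ℕ)), hφ (i - (k : ℕ))⟩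
        have hj : i - (((i - j).val : ℕ) : ZMod n) = j := by
          rw [ZMod.natCast_rightInverse (i - j)]
          exact sub_sub_cancel i j
        have := key (i - j).val i
        rw [hj] at this
        exact this

end HView
end
end

section
/- Let n ≥ 6 be even and let ρ: G_n → PU(1,1) be a representation. Then for all negative p, q ∈ W, Area_n(p, q; ρ) = Area_1(w₁·q, p; ρ), i.e., Area_n(p, q; ρ) = Area_n(ρ(w₁)·q, p; ρ∘S), where w₁ = r₁r_n. -/
noncomputable section
open Matrix Complex
namespace HView

section Core

lemma posRe_aux (x y z : ℂ) (hx : ‖x‖ < 1) (hy : ‖y‖ < 1)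
    (hz : ‖z‖ < 1) :
    0 < ((1 - x * (starRingEnd ℂ) y) * (1 - y * (starRingEnd ℂ) z) *
      (1 - z * (starRingEnd ℂ) x)).re := by
  set a := ‖x‖ with ha
  set b := ‖y‖ with hb
  set cc := ‖z‖ with hcc
  have ha0 : 0 ≤ a := norm_nonneg x
  have hb0 : 0 ≤ b := norm_nonneg y
  have hc0 : 0 ≤ cc := norm_nonneg z
  have h1 : (x * (starRingEnd ℂ) y).re ≤ a * b := by
    calc (x * (starRingEnd ℂ) y).re ≤ ‖x * (starRingEnd ℂ) y‖ := Complex.re_le_norm _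
    _ = a * b := by rw [norm_mul, Complex.norm_conj]
  have h2 : (y * (starRingEnd ℂ) z).re ≤ b * cc := by
    calc (y * (starRingEnd ℂ) z).re ≤ ‖y * (starRingEnd ℂ) z‖ := Complex.re_le_norm _
    _ = b * cc := by rw [norm_mul, Complex.norm_conj]
  have h3 : (z * (starRingEnd ℂ) x).re ≤ cc * a := by
    calc (z * (starRingEnd ℂ) x).re ≤ ‖z * (starRingEnd ℂ) x‖ := Complex.re_le_norm _
    _ = cc * a := by rw [norm_mul, Complex.norm_conj]
  have expand : ((1 - x * (starRingEnd ℂ) y) * (1 - y * (starRingEnd ℂ) z) *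
      (1 - z * (starRingEnd ℂ) x)).re =
      1 - (Complex.normSq x * Complex.normSq y * Complex.normSq z)
      - (1 - Complex.normSq z) * (x * (starRingEnd ℂ) y).re
      - (1 - Complex.normSq x) * (y * (starRingEnd ℂ) z).re
      - (1 - Complex.normSq y) * (z * (starRingEnd ℂ) x).re := by
    simp only [Complex.mul_re, Complex.mul_im, Complex.sub_re, Complex.sub_im,
      Complex.one_re, Complex.one_im, Complex.conj_re, Complex.conj_im, Complex.normSq_apply]
    ring
  rw [expand]
  have nx : Complex.normSq x = a ^ 2 := (Complex.sq_norm x).symm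
  have ny : Complex.normSq y = b ^ 2 := (Complex.sq_norm y).symm
  have nz : Complex.normSq z = cc ^ 2 := (Complex.sq_norm z).symm
  rw [nx, ny, nz]
  have k1 : 0 < 1 - a * b := by nlinarith
  have k2 : 0 < 1 - b * cc := by nlinarith
  have k3 : 0 < 1 - cc * a := by nlinarith
  have key : (1:ℝ) - a^2*b^2*cc^2 - a*b*(1-cc^2) - b*cc*(1-a^2) - cc*a*(1-b^2)
      = (1-a*b)*(1-b*cc)*(1-cc*a) := by ring
  nlinarith [mul_nonneg (by nlinarith : (0:ℝ) ≤ 1 - cc^2) (by linarith : 0 ≤ a*b - (x * (starRingEnd ℂ) y).re),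
    mul_nonneg (by nlinarith : (0:ℝ) ≤ 1 - a^2) (by linarith : 0 ≤ b*cc - (y * (starRingEnd ℂ) z).re),
    mul_nonneg (by nlinarith : (0:ℝ) ≤ 1 - b^2) (by linarith : 0 ≤ cc*a - (z * (starRingEnd ℂ) x).re),
    mul_pos (mul_pos k1 k2) k3]

end Core


lemma herm_conj (x y : W) : herm y x = (starRingEnd ℂ) (herm x y) := by
  simp [herm, map_sub, _root_.map_mul]; ring

lemma herm_self_re (x : W) : (herm x x).re = Complex.normSq (x 0) - Complex.normSq (x 1) := by
  simp [herm, Complex.mul_conj]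

lemma IsNeg.one_ne {x : W} (hx : IsNeg x) : x 1 ≠ 0 := by
  intro h
  have h2 := hx.2
  rw [herm_self_re, h] at h2
  simp at h2
  exact absurd h2 (not_lt.mpr (Complex.normSq_nonneg _))

lemma IsNeg.abs_lt {x : W} (hx : IsNeg x) : ‖x 0 / x 1‖ < 1 := by
  have h1 := hx.2
  rw [herm_self_re] at h1
  have h2 : ‖x 0‖ < ‖x 1‖ := by
    have e0 := Complex.sq_norm (x 0)
    have e1 := Complex.sq_norm (x 1)
    nlinarith [norm_nonneg (x 0), norm_nonneg (x 1)]
  rw [norm_div, div_lt_one (norm_pos_iff.mpr hx.one_ne)]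
  exact h2

lemma herm_factor {x y : W} (hx : x 1 ≠ 0) (hy : y 1 ≠ 0) :
    herm x y = x 1 * (starRingEnd ℂ) (y 1) *
      ((x 0 / x 1) * (starRingEnd ℂ) (y 0 / y 1) - 1) := by
  have hy' : (starRingEnd ℂ) (y 1) ≠ 0 := by simpa using hy
  rw [map_div₀]
  field_simp [herm]
  try ring
  rfl

lemma posRe {a b c : W} (ha : IsNeg a) (hb : IsNeg b) (hc : IsNeg c) :
    0 < (-(herm a b * herm b c * herm c a)).re := by
  set x := a 0 / a 1
  set y := b 0 / b 1
  set z := c 0 / c 1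
  have key : -(herm a b * herm b c * herm c a)
      = ((Complex.normSq (a 1) * Complex.normSq (b 1) * Complex.normSq (c 1) : ℝ) : ℂ) *
        ((1 - x * (starRingEnd ℂ) y) * (1 - y * (starRingEnd ℂ) z) *
          (1 - z * (starRingEnd ℂ) x)) := by
    rw [herm_factor ha.one_ne hb.one_ne, herm_factor hb.one_ne hc.one_ne,
      herm_factor hc.one_ne ha.one_ne]
    push_cast
    rw [← Complex.mul_conj (a 1), ← Complex.mul_conj (b 1), ← Complex.mul_conj (c 1)]
    ring
  rw [key, Complex.re_ofReal_mul]
  have hpos : 0 < Complex.normSq (a 1) * Complex.normSq (b 1) * Complex.normSq (c 1) := by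
    have := Complex.normSq_pos.mpr ha.one_ne
    have := Complex.normSq_pos.mpr hb.one_ne
    have := Complex.normSq_pos.mpr hc.one_ne
    positivity
  exact mul_pos hpos (posRe_aux x y z ha.abs_lt hb.abs_lt hc.abs_lt)

lemma P_ne {a b c : W} (ha : IsNeg a) (hb : IsNeg b) (hc : IsNeg c) :
    -(herm a b * herm b c * herm c a) ≠ 0 := by
  intro h
  have := posRe ha hb hc
  rw [h] at this
  simp at this

lemma herm_ne {a b : W} (ha : IsNeg a) (hb : IsNeg b) : herm a b ≠ 0 := by
  intro h
  have := posRe ha hb hb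
  rw [h] at this
  simp at this


lemma triArea_cyc (a b c : W) : triArea a b c = triArea b c a := by
  unfold triArea
  congr 2
  ring

lemma triArea_swap {a b c : W} (ha : IsNeg a) (hb : IsNeg b) (hc : IsNeg c) :
    triArea a c b = -triArea a b c := by
  unfold triArea
  have hconj : -(herm a c * herm c b * herm b a)
      = (starRingEnd ℂ) (-(herm a b * herm b c * herm c a)) := by
    rw [herm_conj a c, herm_conj c b, herm_conj b a]
    simp only [map_neg, _root_.map_mul, Complex.conj_conj]
    ring
  rw [hconj, Complex.arg_conj]
  have hre := posRe ha hb hc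
  have : Complex.arg (-(herm a b * herm b c * herm c a)) ≠ Real.pi := by
    intro h
    rw [Complex.arg_eq_pi_iff] at h
    linarith [h.1]
  rw [if_neg this]
  ring

lemma arg_lt {z : ℂ} (h : 0 < z.re) : |Complex.arg z| < Real.pi / 2 :=
  Complex.abs_arg_lt_pi_div_two_iff.mpr (Or.inl h)

lemma ne_of_posRe {z : ℂ} (h : 0 < z.re) : z ≠ 0 := by
  intro h0; rw [h0] at h; simp at h

lemma quad {c d u v : W} (hc : IsNeg c) (hd : IsNeg d) (hu : IsNeg u) (hv : IsNeg v) :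
    triArea c d u + triArea c u v = triArea c d v + triArea d u v := by
  unfold triArea
  set A := -(herm c d * herm d u * herm u c) with hA
  set B := -(herm c u * herm u v * herm v c) with hB
  set C := -(herm c d * herm d v * herm v c) with hC
  set D := -(herm d u * herm u v * herm v d) with hD
  have hreA := posRe hc hd hu
  have hreB := posRe hc hu hv
  have hreC := posRe hc hd hv
  have hreD := posRe hd hu hv
  have hargAB : Complex.arg (A * B) = Complex.arg A + Complex.arg B := by
    apply Complex.arg_mul (ne_of_posRe hreA) (ne_of_posRe hreB)
    have h1 := arg_lt hreA
    have h2 := arg_lt hreB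
    rw [abs_lt] at h1 h2
    constructor <;> [linarith; linarith]
  have hargCD : Complex.arg (C * D) = Complex.arg C + Complex.arg D := by
    apply Complex.arg_mul (ne_of_posRe hreC) (ne_of_posRe hreD)
    have h1 := arg_lt hreC
    have h2 := arg_lt hreD
    rw [abs_lt] at h1 h2
    constructor <;> [linarith; linarith]
  set Q := herm c d * herm d u * herm u v * herm v c with hQ
  have e1 : herm c u = (starRingEnd ℂ) (herm u c) := herm_conj u c
  have e2 : herm v d = (starRingEnd ℂ) (herm d v) := herm_conj d v
  have m1 : herm u c * (starRingEnd ℂ) (herm u c) = (Complex.normSq (herm u c) : ℂ) :=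
    Complex.mul_conj _
  have m2 : herm d v * (starRingEnd ℂ) (herm d v) = (Complex.normSq (herm d v) : ℂ) :=
    Complex.mul_conj _
  have hAB : A * B = (Complex.normSq (herm u c) : ℂ) * Q := by
    rw [hA, hB, hQ, e1]
    linear_combination (herm c d * herm d u * herm u v * herm v c) * m1
  have hCD : C * D = (Complex.normSq (herm d v) : ℂ) * Q := by
    rw [hC, hD, hQ, e2]
    linear_combination (herm c d * herm d u * herm u v * herm v c) * m2
  have hn1 : 0 < Complex.normSq (herm u c) := Complex.normSq_pos.mpr (herm_ne hu hc)
  have hn2 : 0 < Complex.normSq (herm d v) := Complex.normSq_pos.mpr (herm_ne hd hv)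
  have : Complex.arg (A * B) = Complex.arg (C * D) := by
    rw [hAB, hCD, Complex.arg_real_mul _ hn1, Complex.arg_real_mul _ hn2]
  have hfin : Complex.arg A + Complex.arg B = Complex.arg C + Complex.arg D := by
    rw [← hargAB, ← hargCD, this]
  linarith [hfin]

lemma centre_change {c c' x y : W} (hc : IsNeg c) (hc' : IsNeg c') (hx : IsNeg x)
    (hy : IsNeg y) :
    triArea c' x y = triArea c x y + triArea c c' x - triArea c c' y := by
  have := quad hc hc' hx hy
  linarith

lemma triArea_neg₁ (a b c : W) : triArea (-a) b c = triArea a b c := by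
  unfold triArea
  congr 2
  simp only [herm, Pi.neg_apply, map_neg]
  ring

lemma triArea_neg₂ (a b c : W) : triArea a (-b) c = triArea a b c := by
  unfold triArea
  congr 2
  simp only [herm, Pi.neg_apply, map_neg]
  ring

lemma triArea_neg₃ (a b c : W) : triArea a b (-c) = triArea a b c := by
  unfold triArea
  congr 2
  simp only [herm, Pi.neg_apply, map_neg]
  ring

/-- "equal up to sign" relation -/
def pmEq (x y : W) : Prop := x = y ∨ x = -y

lemma pmEq_refl (x : W) : pmEq x x := Or.inl rfl

lemma triArea_pm₂ {b b' : W} (a c : W) (h : pmEq b b') : triArea a b c = triArea a b' c := by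
  rcases h with rfl | rfl
  · rfl
  · rw [triArea_neg₂]

lemma triArea_pm₃ {c c' : W} (a b : W) (h : pmEq c c') : triArea a b c = triArea a b c' := by
  rcases h with rfl | rfl
  · rfl
  · rw [triArea_neg₃]

lemma IsNeg.pm {x y : W} (h : pmEq x y) (hy : IsNeg y) : IsNeg x := by
  rcases h with rfl | rfl
  · exact hy
  · refine ⟨fun h0 => hy.1 (by simpa using congrArg Neg.neg h0), ?_⟩
    have : herm (-y) (-y) = herm y y := by simp only [herm, Pi.neg_apply, map_neg]; ring
    rw [this]; exact hy.2

lemma herm_mulVec (A : SU11) (x y : W) :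
    herm (((A : SpecialLinearGroup (Fin 2) ℂ) : Matrix (Fin 2) (Fin 2) ℂ).mulVec x)
      (((A : SpecialLinearGroup (Fin 2) ℂ) : Matrix (Fin 2) (Fin 2) ℂ).mulVec y)
      = herm x y := by
  have hA : ((A : SpecialLinearGroup (Fin 2) ℂ) : Matrix (Fin 2) (Fin 2) ℂ)ᴴ * Jm *
      ((A : SpecialLinearGroup (Fin 2) ℂ) : Matrix (Fin 2) (Fin 2) ℂ) = Jm := A.2
  set M := ((A : SpecialLinearGroup (Fin 2) ℂ) : Matrix (Fin 2) (Fin 2) ℂ) with hM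
  have f : ∀ i j : Fin 2, (Mᴴ * Jm * M) i j = Jm i j := fun i j => by rw [hA]
  have g00 := f 0 0
  have g01 := f 0 1
  have g10 := f 1 0
  have g11 := f 1 1
  simp only [Matrix.mul_apply, Jm, Matrix.conjTranspose_apply, Fin.sum_univ_two,
    Matrix.cons_val', Matrix.cons_val_zero, Matrix.cons_val_one, Matrix.head_cons,
    Matrix.head_fin_const, Matrix.empty_val', Matrix.cons_val_fin_one,
    Matrix.of_apply, Complex.star_def, mul_one, mul_zero, zero_mul, one_mul, add_zero,
    zero_add, mul_neg, neg_mul] at g00 g01 g10 g11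
  have c00 := congrArg (starRingEnd ℂ) g00
  have c01 := congrArg (starRingEnd ℂ) g01
  have c10 := congrArg (starRingEnd ℂ) g10
  have c11 := congrArg (starRingEnd ℂ) g11
  simp only [map_add, map_sub, map_neg, _root_.map_mul, _root_.map_one, map_zero,
    Complex.conj_conj] at c00 c01 c10 c11
  simp only [herm, Matrix.mulVec, dotProduct, Fin.sum_univ_two, map_add, _root_.map_mul]
  linear_combination (x 0 * (starRingEnd ℂ) (y 0)) * c00 + (x 0 * (starRingEnd ℂ) (y 1)) * c01
    + (x 1 * (starRingEnd ℂ) (y 0)) * c10 + (x 1 * (starRingEnd ℂ) (y 1)) * c11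

/-- notation for action of SU11 on W -/
def act (A : SU11) (x : W) : W :=
  ((A : SpecialLinearGroup (Fin 2) ℂ) : Matrix (Fin 2) (Fin 2) ℂ).mulVec x

lemma herm_act (A : SU11) (x y : W) : herm (act A x) (act A y) = herm x y :=
  herm_mulVec A x y

lemma IsNeg.act {x : W} (A : SU11) (hx : IsNeg x) : IsNeg (HView.act A x) := by
  refine ⟨?_, ?_⟩
  · intro h0
    have h1 : herm (HView.act A x) (HView.act A x) = herm x x := herm_act A x x
    rw [h0] at h1
    have h2 : herm (0 : W) (0 : W) = 0 := by simp [herm]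
    rw [h2] at h1
    have := hx.2
    rw [← h1] at this
    simp at this
  · rw [herm_act]; exact hx.2

lemma triArea_act (A : SU11) (x y z : W) :
    triArea (act A x) (act A y) (act A z) = triArea x y z := by
  unfold triArea
  rw [herm_act, herm_act, herm_act]

lemma act_mul (A B : SU11) (x : W) : act (A * B) x = act A (act B x) := by
  unfold act
  have h : ((((A * B) : SU11) : SpecialLinearGroup (Fin 2) ℂ) : Matrix (Fin 2) (Fin 2) ℂ)
      = (((A : SpecialLinearGroup (Fin 2) ℂ) : Matrix (Fin 2) (Fin 2) ℂ)) *
        (((B : SpecialLinearGroup (Fin 2) ℂ) : Matrix (Fin 2) (Fin 2) ℂ)) := rfl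
  rw [h, ← Matrix.mulVec_mulVec]

lemma act_one (x : W) : act 1 x = x := by
  unfold act
  show ((1 : Matrix (Fin 2) (Fin 2) ℂ)).mulVec x = x
  simp

lemma act_negOne (x : W) : act negOne x = -x := by
  unfold act
  show ((-1 : Matrix (Fin 2) (Fin 2) ℂ)).mulVec x = -x
  simp [Matrix.neg_mulVec]

lemma act_mul_negOne (A : SU11) (x : W) : act (A * negOne) x = -(act A x) := by
  rw [act_mul, act_negOne]
  unfold act
  simp [Matrix.mulVec_neg]

lemma Hmk_rel {n : ℕ} {x : FreeGroup (ZMod n)} (h : x ∈ Hrels n) :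
    PresentedGroup.mk (Hrels n) x = 1 := by
  have : x ∈ Subgroup.normalClosure (Hrels n) := Subgroup.subset_normalClosure h
  exact (QuotientGroup.eq_one_iff x).mpr this

lemma long_rel (n : ℕ) :
    (((List.range n).map (fun k => r n ((k + 1 : ℕ) : ZMod n))).reverse).prod = 1 := by
  have h : longRel n ∈ Hrels n := Or.inr rfl
  have := Hmk_rel h
  unfold longRel at this
  rw [← List.prod_hom _ (PresentedGroup.mk (Hrels n))] at this
  rw [← List.map_reverse, List.map_map] at this
  rw [← List.map_reverse]
  exact this

lemma v_zero (n : ℕ) : v n 0 = 1 := by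
  simp [v]

lemma v_succ {n k : ℕ} (h : k + 1 < n) : v n (k + 1) = r n ((k + 1 : ℕ) : ZMod n) * v n k := by
  have h1 : (k + 1) % n = k + 1 := Nat.mod_eq_of_lt h
  have h2 : k % n = k := Nat.mod_eq_of_lt (by omega)
  unfold v
  rw [h1, h2, List.range_succ]
  simp

lemma long_rel' (n : ℕ) (hn : 1 ≤ n) : r n 0 * v n (n - 1) = 1 := by
  have h := long_rel n
  rw [show List.range n = List.range (n-1) ++ [n-1] by
    rw [← List.range_succ]; congr 1; omega] at h
  simp only [List.map_append, List.reverse_append, List.prod_append, List.map_cons,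
    List.map_nil, List.reverse_cons, List.reverse_nil, List.nil_append, List.prod_cons,
    List.prod_nil, mul_one] at h
  have hcast : (((n - 1) + 1 : ℕ) : ZMod n) = 0 := by
    rw [show (n-1)+1 = n by omega]
    exact ZMod.natCast_self n
  rw [hcast] at h
  have hv : v n (n - 1)
      = (((List.range (n - 1)).map (fun m => r n ((m + 1 : ℕ) : ZMod n))).reverse).prod := by
    unfold v
    rw [Nat.mod_eq_of_lt (by omega)]
  rw [hv]
  exact h

lemma v_last (n : ℕ) (hn : 1 ≤ n) : v n (n - 1) = r n 0 := by
  have h := long_rel' n hn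
  have := r_inv n 0
  calc v n (n - 1) = (r n 0)⁻¹ * (r n 0 * v n (n - 1)) := by group
  _ = (r n 0)⁻¹ := by rw [h, mul_one]
  _ = r n 0 := r_inv n 0

lemma Sv {n : ℕ} (S : MulAut (H n)) (hS : ∀ i : ZMod n, S (r n i) = r n (i + 1)) :
    ∀ k : ℕ, k + 1 < n → S (v n k) = v n (k + 1) * r n 1 := by
  intro k
  induction k with
  | zero =>
    intro h
    rw [v_zero, _root_.map_one]
    have h1 : v n 1 = r n 1 := by
      have := v_succ (n := n) (k := 0) h
      rw [v_zero, mul_one] at this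
      rw [this]
      norm_num
    rw [h1, r_sq]
  | succ k ih =>
    intro h
    have e1 : v n (k+1+1) = r n ((k+1+1 : ℕ) : ZMod n) * v n (k+1) := v_succ (by omega)
    have e2 : v n (k+1) = r n ((k+1 : ℕ) : ZMod n) * v n k := v_succ (by omega)
    have hcast : ((k + 1 : ℕ) : ZMod n) + 1 = ((k + 1 + 1 : ℕ) : ZMod n) := by push_cast; ring
    rw [e2, _root_.map_mul, hS, ih (by omega), e1, e2, hcast]
    group

lemma Gsub_conj {n : ℕ} {x : H n} (hx : x ∈ Gsub n) : r n 0 * x * r n 0 ∈ Gsub n := by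
  unfold Gsub at hx ⊢
  refine Subgroup.closure_induction (p := fun y _ => r n 0 * y * r n 0 ∈
    Subgroup.closure {x : H n | ∃ i j : ZMod n, x = r n i * r n j}) ?_ ?_ ?_ ?_ hx
  · rintro y ⟨i, j, rfl⟩
    have h : r n 0 * (r n i * r n j) * r n 0 = (r n 0 * r n i) * (r n j * r n 0) := by group
    rw [h]
    exact mul_mem (Subgroup.subset_closure ⟨0, i, rfl⟩) (Subgroup.subset_closure ⟨j, 0, rfl⟩)
  · show r n 0 * (1 : H n) * r n 0 ∈ _
    have h : r n 0 * (1 : H n) * r n 0 = r n 0 * r n 0 := by group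
    rw [h]
    exact Subgroup.subset_closure ⟨0, 0, rfl⟩
  · intro a b _ _ ha hb
    have h : r n 0 * (a * b) * r n 0 = (r n 0 * a * r n 0) * (r n 0 * b * r n 0) := by
      have h0 : r n 0 * r n 0 = 1 := r_sq n 0
      calc r n 0 * (a * b) * r n 0 = r n 0 * a * (r n 0 * r n 0) * b * r n 0 := by
            rw [h0]; group
      _ = (r n 0 * a * r n 0) * (r n 0 * b * r n 0) := by group
    rw [h]
    exact mul_mem ha hb
  · intro a _ ha
    have h : r n 0 * a⁻¹ * r n 0 = (r n 0 * a * r n 0)⁻¹ := by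
      rw [_root_.mul_inv_rev, _root_.mul_inv_rev, r_inv]
      group
    rw [h]
    exact inv_mem ha

lemma v_even_mem {n : ℕ} : ∀ t : ℕ, 2 * t < n → v n (2 * t) ∈ Gsub n := by
  intro t
  induction t with
  | zero => intro _; rw [show 2 * 0 = 0 by ring, v_zero]; exact one_mem _
  | succ t ih =>
    intro h
    have e : v n (2 * (t + 1)) = r n ((2*t+2 : ℕ) : ZMod n) * (r n ((2*t+1 : ℕ) : ZMod n)
        * v n (2 * t)) := by
      rw [show 2 * (t+1) = (2*t+1)+1 by ring, v_succ (by omega), v_succ (by omega)]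
    rw [e, ← mul_assoc]
    exact mul_mem (rr_mem n _ _) (ih (by omega))

lemma v_odd_mem {n : ℕ} : ∀ t : ℕ, 2 * t + 1 < n → v n (2 * t + 1) * r n 0 ∈ Gsub n := by
  intro t
  induction t with
  | zero =>
    intro h
    have e : v n 1 = r n ((1:ℕ) : ZMod n) := by
      have := v_succ (n := n) (k := 0) (by omega)
      rw [v_zero, mul_one] at this
      rw [show (0+1 : ℕ) = 1 from rfl] at this
      exact this
    rw [show 2*0+1 = 1 by ring, e]
    exact rr_mem n _ _
  | succ t ih =>
    intro h
    have e : v n (2 * (t+1) + 1) = r n ((2*t+3 : ℕ) : ZMod n) * (r n ((2*t+2 : ℕ) : ZMod n)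
        * v n (2 * t + 1)) := by
      rw [show 2 * (t+1) + 1 = (2*t+2)+1 by ring, v_succ (by omega), v_succ (by omega)]
    have e2 : v n (2 * (t+1) + 1) * r n 0 = (r n ((2*t+3 : ℕ) : ZMod n) * r n ((2*t+2 : ℕ) : ZMod n))
        * (v n (2 * t + 1) * r n 0) := by rw [e]; group
    rw [e2]
    exact mul_mem (rr_mem n _ _) (ih (by omega))

lemma w0_mem {n : ℕ} {i : ℕ} (hi : i < n) : w0 n i ∈ Gsub n := by
  unfold w0
  by_cases h : Even i
  · rw [if_pos h]
    rw [Nat.even_iff] at h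
    have e : i = 2 * (i / 2) := by omega
    rw [e]
    exact v_even_mem _ (by omega)
  · rw [if_neg h]
    rw [Nat.even_iff] at h
    have e : i = 2 * (i / 2) + 1 := by omega
    rw [e]
    exact v_odd_mem _ (by omega)

lemma w_mem {n : ℕ} (hn : 6 ≤ n) (j : ℕ) : w n j ∈ Gsub n := by
  unfold w
  by_cases h : j % (2 * n - 2) ≤ n - 2
  · rw [if_pos h]
    exact w0_mem (by omega)
  · rw [if_neg h]
    have h2 : j % (2 * n - 2) < 2 * n - 2 := Nat.mod_lt _ (by omega)
    exact Gsub_conj (w0_mem (by omega))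

lemma r_cancel (n : ℕ) (i : ZMod n) (x : H n) : r n i * (r n i * x) = x := by
  rw [← mul_assoc, r_sq, one_mul]

lemma w0_even' {n i : ℕ} (h : Even i) : w0 n i = v n i := if_pos h

lemma w0_odd' {n i : ℕ} (h : ¬ Even i) : w0 n i = v n i * r n 0 := if_neg h

lemma w_first {n j : ℕ} (hn : 6 ≤ n) (hj : j ≤ n - 2) : w n j = w0 n j := by
  unfold w
  rw [Nat.mod_eq_of_lt (by omega)]
  exact if_pos hj

lemma w_second {n j : ℕ} (hn : 6 ≤ n) (hj1 : n - 2 < j) (hj2 : j < 2 * n - 2) :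
    w n j = r n 0 * w0 n (j - (n - 1)) * r n 0 := by
  unfold w
  rw [Nat.mod_eq_of_lt (by omega)]
  exact if_neg (by omega)

lemma w_zero {n : ℕ} (hn : 6 ≤ n) : w n 0 = 1 := by
  rw [w_first hn (by omega), w0_even' (Even.zero), v_zero]

lemma w_m {n : ℕ} (hn : 6 ≤ n) : w n (2 * n - 2) = 1 := by
  unfold w
  rw [Nat.mod_self]
  rw [if_pos (by omega)]
  rw [w0_even' (Even.zero), v_zero]

lemma w_one {n : ℕ} (hn : 6 ≤ n) : w n 1 = r n 1 * r n 0 := by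
  rw [w_first hn (by omega), w0_odd' (by simp), ]
  have e : v n 1 = r n ((1:ℕ) : ZMod n) := by
    have := v_succ (n := n) (k := 0) (by omega)
    rw [v_zero, mul_one] at this
    exact this
  rw [e]
  norm_num

lemma w_nsub1 {n : ℕ} (hn : 6 ≤ n) : w n (n - 1) = 1 := by
  rw [w_second hn (by omega) (by omega), Nat.sub_self, w0_even' (Even.zero), v_zero, mul_one,
    r_sq]

lemma keyO {n : ℕ} (hn : 6 ≤ n) (heven : Even n) (S : MulAut (H n))
    (hS : ∀ i : ZMod n, S (r n i) = r n (i + 1)) {j : ℕ} (hj : j < 2 * n - 2)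
    (hodd : ¬ Even j) :
    S (w n j) = (if j + 1 ≤ n - 1 then w n (j + 1) else w n 1 * w n (j + 1)) := by
  have hne : Even n := heven
  rw [Nat.even_iff] at hne
  rw [Nat.even_iff] at hodd
  by_cases hcase : j ≤ n - 2
  · -- first range, j odd so j ≤ n - 3
    have hj3 : j ≤ n - 3 := by omega
    rw [if_pos (by omega)]
    rw [w_first hn hcase, w0_odd' (by rw [Nat.even_iff]; omega)]
    rw [_root_.map_mul, Sv S hS j (by omega), hS 0]
    rw [w_first hn (by omega), w0_even' (by rw [Nat.even_iff]; omega)]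
    rw [zero_add]
    simp only [mul_assoc, r_sq, mul_one]
  · -- second range
    have hi : n - 1 ≤ j := by omega
    set i := j - (n - 1) with hidef
    have hieven : i % 2 = 0 := by omega
    have hile : i ≤ n - 2 := by omega
    rw [if_neg (by omega)]
    rw [w_second hn (by omega) hj, w0_even' (by rw [Nat.even_iff]; omega)]
    rw [_root_.map_mul, _root_.map_mul, hS 0, Sv S hS i (by omega), zero_add]
    by_cases hlast : i = n - 2
    · -- j = 2n - 3
      have hj1 : j + 1 = 2 * n - 2 := by omega
      rw [hj1, w_m hn, mul_one, w_one hn]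
      rw [hlast, show n - 2 + 1 = n - 1 by omega, v_last n (by omega)]
      simp only [mul_assoc, r_sq, mul_one, r_cancel]
    · have hi2 : i + 1 ≤ n - 3 := by omega
      rw [w_second (j := j + 1) hn (by omega) (by omega),
        show j + 1 - (n - 1) = i + 1 by omega,
        w0_odd' (by rw [Nat.even_iff]; omega), w_one hn]
      simp only [mul_assoc, r_sq, mul_one, r_cancel]

lemma keyE {n : ℕ} (hn : 6 ≤ n) (heven : Even n) (S : MulAut (H n))
    (hS : ∀ i : ZMod n, S (r n i) = r n (i + 1)) {j : ℕ} (hj : j < 2 * n - 2)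
    (hev : Even j) :
    S (w n j) * w n 1 = (if j + 1 ≤ n - 1 then w n (j + 1) else w n 1 * w n (j + 1)) := by
  have hne : Even n := heven
  rw [Nat.even_iff] at hne
  rw [Nat.even_iff] at hev
  by_cases hcase : j ≤ n - 2
  · rw [if_pos (by omega)]
    rw [w_first hn hcase, w0_even' (by rw [Nat.even_iff]; omega)]
    rw [Sv S hS j (by omega), w_one hn]
    by_cases hlast : j = n - 2
    · rw [hlast, show n - 2 + 1 = n - 1 by omega, v_last n (by omega), w_nsub1 hn]
      simp only [mul_assoc, r_sq, mul_one, r_cancel]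
    · rw [w_first hn (by omega), w0_odd' (by rw [Nat.even_iff]; omega)]
      simp only [mul_assoc, r_sq, mul_one, r_cancel]
  · have hi : n - 1 ≤ j := by omega
    set i := j - (n - 1) with hidef
    have hiodd : i % 2 = 1 := by omega
    have hile : i ≤ n - 3 := by omega
    rw [if_neg (by omega)]
    rw [w_second hn (by omega) hj, w0_odd' (by rw [Nat.even_iff]; omega)]
    rw [_root_.map_mul, _root_.map_mul, _root_.map_mul, hS 0, Sv S hS i (by omega), zero_add]
    rw [w_second (j := j + 1) hn (by omega) (by omega),
      show j + 1 - (n - 1) = i + 1 by omega,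
      w0_even' (by rw [Nat.even_iff]; omega), w_one hn]
    simp only [mul_assoc, r_sq, mul_one, r_cancel]

lemma pm_of_mk_eq {A C : SU11} (h : (QuotientGroup.mk A : PU11) = QuotientGroup.mk C)
    (x : W) : pmEq (act A x) (act C x) := by
  have h2 : A⁻¹ * C ∈ pm1 := QuotientGroup.eq.mp h
  rcases h2 with h2 | h2
  · left
    have : C = A := by
      have := h2
      rw [inv_mul_eq_one] at this
      rw [this]
    rw [this]
  · right
    rw [Set.mem_singleton_iff] at h2
    have hC : C = A * negOne := by rw [← h2]; group
    rw [hC, act_mul_negOne, neg_neg]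

lemma rho_mul {n : ℕ} (ρ : ↥(Gsub n) →* PU11) {a b : H n} (ha : a ∈ Gsub n)
    (hb : b ∈ Gsub n) : ρ ⟨a, ha⟩ * ρ ⟨b, hb⟩ = ρ ⟨a * b, mul_mem ha hb⟩ := by
  rw [← _root_.map_mul]
  rfl

lemma rho_congr {n : ℕ} (ρ : ↥(Gsub n) →* PU11) {a b : H n} (h : a = b)
    (ha : a ∈ Gsub n) (hb : b ∈ Gsub n) : ρ ⟨a, ha⟩ = ρ ⟨b, hb⟩ := by
  subst h
  rfl

lemma w_mod' {n : ℕ} (j : ℕ) : w n (j % (2 * n - 2)) = w n j := by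
  unfold w
  rw [Nat.mod_mod_of_dvd _ dvd_rfl]

lemma mk_one_of (h1 : (1:PU11) = QuotientGroup.mk (1 : SU11)) : True := trivial

lemma pmEq_symm {x y : W} (h : pmEq x y) : pmEq y x := by
  rcases h with rfl | rfl
  · exact Or.inl rfl
  · exact Or.inr (by rw [neg_neg])

lemma pmEq_act (A : SU11) {x y : W} (h : pmEq x y) : pmEq (act A x) (act A y) := by
  rcases h with rfl | rfl
  · exact Or.inl rfl
  · refine Or.inr ?_
    unfold act
    rw [Matrix.mulVec_neg]

lemma act_inv_act (A : SU11) (x : W) : act A⁻¹ (act A x) = x := by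
  rw [← act_mul, inv_mul_cancel, act_one]

lemma act_act_inv (A : SU11) (x : W) : act A (act A⁻¹ x) = x := by
  rw [← act_mul, mul_inv_cancel, act_one]

lemma w_one_mul_wn {n : ℕ} (hn : 6 ≤ n) : w n 1 * w n n = 1 := by
  have e : v n 1 = r n ((1:ℕ) : ZMod n) := by
    have := v_succ (n := n) (k := 0) (by omega)
    rw [v_zero, mul_one] at this
    exact this
  rw [w_one hn, w_second (j := n) hn (by omega) (by omega), show n - (n - 1) = 1 by omega,
    w0_odd' (by simp), e]
  norm_num
  simp only [mul_assoc, r_cancel, r_sq, mul_one]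

/-- `Area_n(p, q; ρ) = Area_1(w₁·q, p; ρ)`. -/
theorem areaG_shift (n : ℕ) (hn : 6 ≤ n) (heven : Even n)
    (ρ : ↥(Gsub n) →* PU11)
    (S : MulAut (H n)) (hS : ∀ i : ZMod n, S (r n i) = r n (i + 1))
    (B B' : ℕ → SU11) (hB : IsLiftGW ρ (w n) B)
    (hB' : IsLiftGW ρ (fun j => S (w n j)) B')
    (c p q : W) (hc : IsNeg c) (hp : IsNeg p) (hq : IsNeg q) :
    areaG n B c p q =
      areaG n B' c
        (((B 1 : SpecialLinearGroup (Fin 2) ℂ) : Matrix (Fin 2) (Fin 2) ℂ).mulVec q) p := by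
  have hnm : n % 2 = 0 := Nat.even_iff.mp heven
  set m := 2 * n - 2 with hmdef
  have hm10 : 10 ≤ m := by omega
  set M : SU11 := B 1 with hMdef
  set X : ℕ → W := fun k => act (B (k % m)) (if Even (k % m) then p else q) with hXdef
  set Z : ℕ → W := fun k => act (B' (k % m)) (if Even (k % m) then act M q else p) with hZdef
  set c' : W := act M⁻¹ c with hc'def
  have hXneg : ∀ k, IsNeg (X k) := by
    intro k
    apply IsNeg.act
    split <;> [exact hp; exact hq]
  have hMXneg : ∀ k, IsNeg (act M (X k)) := fun k => (hXneg k).act M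
  have hc' : IsNeg c' := hc.act M⁻¹
  have hBmk : ∀ k : ℕ, (QuotientGroup.mk (B k) : PU11) = ρ ⟨w n k, w_mem hn k⟩ :=
    fun k => hB k (w_mem hn k)
  have hSmem : ∀ j : ℕ, j < m → S (w n j) ∈ Gsub n := by
    intro j hj
    by_cases hev : Even j
    · have hid := keyE hn heven S hS (j := j) (by omega) hev
      have h2 : S (w n j)
          = (if j + 1 ≤ n - 1 then w n (j + 1) else w n 1 * w n (j + 1)) * (w n 1)⁻¹ := by
        rw [← hid]; group
      rw [h2]
      refine mul_mem ?_ (inv_mem (w_mem hn 1))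
      split
      · exact w_mem hn _
      · exact mul_mem (w_mem hn 1) (w_mem hn _)
    · have hid := keyO hn heven S hS (j := j) (by omega) hev
      rw [hid]
      split
      · exact w_mem hn _
      · exact mul_mem (w_mem hn 1) (w_mem hn _)
  have hB'mk : ∀ j : ℕ, (hj : j < m) → (QuotientGroup.mk (B' j) : PU11)
      = ρ ⟨S (w n j), hSmem j hj⟩ := fun j hj => hB' j (hSmem j hj)
  set Y : ℕ → W := fun k => if k % m ≤ n - 1 ∧ k % m ≠ 0 then X k else act M (X k) with hYdef
  have hYneg : ∀ k, IsNeg (Y k) := by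
    intro k
    simp only [hYdef]
    split <;> [exact hXneg k; exact hMXneg k]
  have hZY : ∀ j : ℕ, j < m → pmEq (Z j) (Y (j + 1)) := by
    intro j hj
    have hjm : j % m = j := Nat.mod_eq_of_lt hj
    have hwmod : w n ((j + 1) % m) = w n (j + 1) := by
      rw [hmdef]
      exact w_mod' (j + 1)
    by_cases hev : Even j
    · have hZj : Z j = act (B' j * M) q := by
        simp only [hZdef, hjm, if_pos hev, ← act_mul]
      have hj1lt : j + 1 < m := by
        rw [Nat.even_iff] at hev; omega
      have hoddj1 : ¬ Even ((j + 1) % m) := by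
        rw [Nat.mod_eq_of_lt hj1lt, Nat.even_iff]
        rw [Nat.even_iff] at hev
        omega
      have hXj1 : X (j + 1) = act (B ((j + 1) % m)) q := by
        simp only [hXdef, if_neg hoddj1]
      have hid := keyE hn heven S hS (j := j) (by omega) hev
      by_cases hle : j + 1 ≤ n - 1
      · rw [if_pos hle] at hid
        have hmk : (QuotientGroup.mk (B' j * M) : PU11)
            = QuotientGroup.mk (B ((j + 1) % m)) := by
          have e1 : (QuotientGroup.mk (B' j * M) : PU11)
              = QuotientGroup.mk (B' j) * QuotientGroup.mk (B 1) := rfl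
          rw [e1, hB'mk j hj, hBmk 1, rho_mul, rho_congr ρ hid _ (w_mem hn (j + 1)),
            ← rho_congr ρ hwmod (w_mem hn _) (w_mem hn _), ← hBmk ((j + 1) % m)]
        have hpm := pm_of_mk_eq hmk q
        rw [← hZj, ← hXj1] at hpm
        have hYj1 : Y (j + 1) = X (j + 1) := by
          simp only [hYdef]
          rw [if_pos ⟨by rw [Nat.mod_eq_of_lt hj1lt]; exact hle,
            by rw [Nat.mod_eq_of_lt hj1lt]; omega⟩]
        rw [hYj1]
        exact hpm
      · rw [if_neg hle] at hid
        have hmk : (QuotientGroup.mk (B' j * M) : PU11)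
            = QuotientGroup.mk (M * B ((j + 1) % m)) := by
          have e1 : (QuotientGroup.mk (B' j * M) : PU11)
              = QuotientGroup.mk (B' j) * QuotientGroup.mk (B 1) := rfl
          have e2 : (QuotientGroup.mk (M * B ((j + 1) % m)) : PU11)
              = QuotientGroup.mk (B 1) * QuotientGroup.mk (B ((j + 1) % m)) := rfl
          rw [e1, e2, hB'mk j hj, hBmk 1, hBmk ((j + 1) % m), rho_mul, rho_mul,
            rho_congr ρ hid _ (mul_mem (w_mem hn 1) (w_mem hn (j + 1)))]
          apply rho_congr
          rw [hwmod]
        have hpm := pm_of_mk_eq hmk q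
        rw [← hZj] at hpm
        have hact1 : act (M * B ((j + 1) % m)) q = act M (X (j + 1)) := by
          rw [act_mul, hXj1]
        rw [hact1] at hpm
        have hYj1 : Y (j + 1) = act M (X (j + 1)) := by
          simp only [hYdef]
          rw [if_neg]
          rw [Nat.mod_eq_of_lt hj1lt]
          push_neg
          intro hh
          omega
        rw [hYj1]
        exact hpm
    · have hZj : Z j = act (B' j) p := by
        simp only [hZdef, hjm, if_neg hev]
      have hevj1 : Even ((j + 1) % m) := by
        rcases Nat.lt_or_ge (j + 1) m with h1 | h1
        · rw [Nat.mod_eq_of_lt h1, Nat.even_iff]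
          rw [Nat.even_iff] at hev
          omega
        · rw [show j + 1 = m by omega, Nat.mod_self]
          exact Even.zero
      have hXj1 : X (j + 1) = act (B ((j + 1) % m)) p := by
        simp only [hXdef, if_pos hevj1]
      have hid := keyO hn heven S hS (j := j) (by omega) hev
      by_cases hle : j + 1 ≤ n - 1
      · rw [if_pos hle] at hid
        have hmk : (QuotientGroup.mk (B' j) : PU11)
            = QuotientGroup.mk (B ((j + 1) % m)) := by
          rw [hB'mk j hj, rho_congr ρ hid _ (w_mem hn (j + 1)),
            ← rho_congr ρ hwmod (w_mem hn _) (w_mem hn _), ← hBmk ((j + 1) % m)]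
        have hpm := pm_of_mk_eq hmk p
        rw [← hZj, ← hXj1] at hpm
        have hYj1 : Y (j + 1) = X (j + 1) := by
          simp only [hYdef]
          rw [if_pos ⟨by rw [Nat.mod_eq_of_lt (by omega)]; exact hle,
            by rw [Nat.mod_eq_of_lt (by omega)]; try omega⟩]
        rw [hYj1]
        exact hpm
      · rw [if_neg hle] at hid
        have hmk : (QuotientGroup.mk (B' j) : PU11)
            = QuotientGroup.mk (M * B ((j + 1) % m)) := by
          have e2 : (QuotientGroup.mk (M * B ((j + 1) % m)) : PU11)
              = QuotientGroup.mk (B 1) * QuotientGroup.mk (B ((j + 1) % m)) := rfl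
          rw [e2, hB'mk j hj, hBmk 1, hBmk ((j + 1) % m), rho_mul,
            rho_congr ρ hid _ (mul_mem (w_mem hn 1) (w_mem hn (j + 1)))]
          apply rho_congr
          rw [hwmod]
        have hpm := pm_of_mk_eq hmk p
        rw [← hZj] at hpm
        have hact1 : act (M * B ((j + 1) % m)) p = act M (X (j + 1)) := by
          rw [act_mul, hXj1]
        rw [hact1] at hpm
        have hYj1 : Y (j + 1) = act M (X (j + 1)) := by
          simp only [hYdef]
          rw [if_neg]
          rcases Nat.lt_or_ge (j + 1) m with h1 | h1
          · rw [Nat.mod_eq_of_lt h1]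
            push_neg
            intro hh
            omega
          · rw [show j + 1 = m by omega, Nat.mod_self]
            simp
        rw [hYj1]
        exact hpm
  -- sums
  set g : ℕ → ℝ := fun k => triArea c (X k) (X (k + 1)) with hgdef
  set F : ℕ → ℝ := fun k => triArea c (Y k) (Y (k + 1)) with hFdef
  set φ : ℕ → ℝ := fun k => triArea c c' (X k) with hφdef
  have hL : areaG n B c p q = ∑ j ∈ Finset.range m, g j := by
    unfold areaG
    rw [← hmdef]
    apply Finset.sum_congr rfl
    intro j hj
    rw [Finset.mem_range] at hj
    simp only [hgdef, hXdef, act, Nat.mod_eq_of_lt hj]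
  have hR : areaG n B' c (act M q) p = ∑ j ∈ Finset.range m, triArea c (Z j) (Z (j + 1)) := by
    unfold areaG
    rw [← hmdef]
    apply Finset.sum_congr rfl
    intro j hj
    rw [Finset.mem_range] at hj
    simp only [hZdef, act, Nat.mod_eq_of_lt hj]
  have hXm : X m = X 0 := by simp only [hXdef, Nat.mod_self, Nat.zero_mod]; rfl
  have hZm : Z m = Z 0 := by simp only [hZdef, Nat.mod_self, Nat.zero_mod]; rfl
  have hXm1 : X (m + 1) = X 1 := by
    simp only [hXdef]
    rw [Nat.add_mod_left]
  have hYm1 : Y (m + 1) = Y 1 := by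
    simp only [hYdef, hXm1]
    rw [Nat.add_mod_left]
  have hterm : ∀ j : ℕ, j < m → triArea c (Z j) (Z (j + 1)) = F (j + 1) := by
    intro j hj
    have h1 : pmEq (Z j) (Y (j + 1)) := hZY j hj
    have h2 : pmEq (Z (j + 1)) (Y (j + 2)) := by
      rcases Nat.lt_or_ge (j + 1) m with hl | hl
      · exact hZY (j + 1) hl
      · rw [show j + 1 = m by omega, hZm, show j + 2 = m + 1 by omega, hYm1]
        exact hZY 0 (by omega)
    rw [triArea_pm₂ c (Z (j + 1)) h1, triArea_pm₃ c (Y (j + 1)) h2]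
  have hRF : areaG n B' c (act M q) p = ∑ j ∈ Finset.range m, F (j + 1) := by
    rw [hR]
    exact Finset.sum_congr rfl (fun j hj => hterm j (Finset.mem_range.mp hj))
  -- term computations
  have hδ0 : ∀ k : ℕ, 1 ≤ k → k ≤ n - 2 → F k = g k := by
    intro k h1 h2
    have hYk : Y k = X k := by
      simp only [hYdef]
      rw [if_pos ⟨by rw [Nat.mod_eq_of_lt (by omega)]; try omega,
        by rw [Nat.mod_eq_of_lt (by omega)]; try omega⟩]
    have hYk1 : Y (k + 1) = X (k + 1) := by
      simp only [hYdef]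
      rw [if_pos ⟨by rw [Nat.mod_eq_of_lt (by omega)]; try omega,
        by rw [Nat.mod_eq_of_lt (by omega)]; try omega⟩]
    simp only [hFdef, hgdef, hYk, hYk1]
  have hactpair : ∀ k : ℕ, triArea c (act M (X k)) (act M (X (k + 1)))
      = triArea c' (X k) (X (k + 1)) := by
    intro k
    have h3 := triArea_act M⁻¹ c (act M (X k)) (act M (X (k + 1)))
    rw [act_inv_act, act_inv_act] at h3
    exact h3.symm
  have hδtel : ∀ k : ℕ, n ≤ k → k ≤ m - 1 → F k = g k + (φ k - φ (k + 1)) := by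
    intro k h1 h2
    have hYk : Y k = act M (X k) := by
      simp only [hYdef]
      rw [if_neg]
      rw [Nat.mod_eq_of_lt (by omega)]
      push_neg
      intro hh
      omega
    have hYk1 : Y (k + 1) = act M (X (k + 1)) := by
      simp only [hYdef]
      rw [if_neg]
      rcases Nat.lt_or_ge (k + 1) m with hl | hl
      · rw [Nat.mod_eq_of_lt hl]
        push_neg
        intro hh
        omega
      · rw [show k + 1 = m by omega, Nat.mod_self]
        simp
    have e1 : F k = triArea c' (X k) (X (k + 1)) := by
      simp only [hFdef, hYk, hYk1]
      exact hactpair k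
    rw [e1, centre_change hc hc' (hXneg k) (hXneg (k + 1))]
    simp only [hgdef, hφdef]
    ring
  have hδmid : F (n - 1) = triArea c (X (n - 1)) (act M (X n)) := by
    have hY1 : Y (n - 1) = X (n - 1) := by
      simp only [hYdef]
      rw [if_pos ⟨by rw [Nat.mod_eq_of_lt (by omega)]; try omega,
        by rw [Nat.mod_eq_of_lt (by omega)]; try omega⟩]
    have hY2 : Y (n - 1 + 1) = act M (X n) := by
      rw [show n - 1 + 1 = n by omega]
      simp only [hYdef]
      rw [if_neg]
      rw [Nat.mod_eq_of_lt (by omega)]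
      push_neg
      intro hh
      omega
    simp only [hFdef, hY1, hY2]
  -- sum assembly
  have hsum1 : ∑ j ∈ Finset.range m, F (j + 1)
      = (∑ j ∈ Finset.range (m - 1), F (j + 1)) + F m := by
    conv_lhs => rw [show m = (m - 1) + 1 by omega]
    rw [Finset.sum_range_succ, show m - 1 + 1 = m by omega]
  have hsum2 : ∑ j ∈ Finset.range m, g j = g 0 + ∑ j ∈ Finset.range (m - 1), g (j + 1) := by
    conv_lhs => rw [show m = (m - 1) + 1 by omega]
    rw [Finset.sum_range_succ']
    exact add_comm _ _
  have hdist : ∑ j ∈ Finset.range (m - 1), (F (j + 1) - g (j + 1))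
      = (∑ j ∈ Finset.range (m - 1), F (j + 1)) - ∑ j ∈ Finset.range (m - 1), g (j + 1) :=
    Finset.sum_sub_distrib _ _
  have hsplit : ∑ j ∈ Finset.range (m - 1), (F (j + 1) - g (j + 1))
      = (∑ j ∈ Finset.range (n - 1), (F (j + 1) - g (j + 1)))
        + ∑ j ∈ Finset.Ico (n - 1) (m - 1), (F (j + 1) - g (j + 1)) :=
    (Finset.sum_range_add_sum_Ico _ (by omega)).symm
  have hpart1 : ∑ j ∈ Finset.range (n - 1), (F (j + 1) - g (j + 1))
      = F (n - 1) - g (n - 1) := by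
    rw [Finset.sum_eq_single_of_mem (n - 2) (Finset.mem_range.mpr (by omega))]
    · rw [show n - 2 + 1 = n - 1 by omega]
    · intro b hb hbne
      rw [Finset.mem_range] at hb
      rw [hδ0 (b + 1) (by omega) (by omega)]
      ring
  have hpart2 : ∑ j ∈ Finset.Ico (n - 1) (m - 1), (F (j + 1) - g (j + 1)) = φ n - φ m := by
    rw [Finset.sum_Ico_eq_sum_range]
    calc ∑ i ∈ Finset.range (m - 1 - (n - 1)),
          (F (n - 1 + i + 1) - g (n - 1 + i + 1))
        = ∑ i ∈ Finset.range (m - n), (φ (n + i) - φ (n + i + 1)) := by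
          rw [show m - 1 - (n - 1) = m - n by omega]
          apply Finset.sum_congr rfl
          intro i hi
          rw [Finset.mem_range] at hi
          rw [show n - 1 + i + 1 = n + i by omega, hδtel (n + i) (by omega) (by omega)]
          ring
      _ = φ (n + 0) - φ (n + (m - n)) := Finset.sum_range_sub' (fun i => φ (n + i)) (m - n)
      _ = φ n - φ m := by rw [show n + (m - n) = m by omega, Nat.add_zero]
  -- the closing identity
  have hXn : X n = act (B (n % m)) p := by
    have hev : Even (n % m) := by
      rw [Nat.mod_eq_of_lt (by omega)]
      exact heven
    simp only [hXdef, if_pos hev]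
  have hX0 : X 0 = act (B 0) p := by
    simp only [hXdef, Nat.zero_mod, if_pos (Even.zero : Even (0:ℕ))]; simp
  have hX1 : X 1 = act (B 1) q := by
    have hodd : ¬ Even (1 % m) := by
      rw [Nat.mod_eq_of_lt (by omega)]
      simp
    simp only [hXdef, if_neg hodd]
    rw [Nat.mod_eq_of_lt (by omega)]
  have hXn1 : X (n - 1) = act (B ((n - 1) % m)) q := by
    have hodd : ¬ Even ((n - 1) % m) := by
      rw [Nat.mod_eq_of_lt (by omega), Nat.even_iff]
      omega
    simp only [hXdef, if_neg hodd]
  have hR1 : pmEq (act M (X n)) (X 0) := by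
    have hmk : (QuotientGroup.mk (M * B (n % m)) : PU11) = QuotientGroup.mk (B 0) := by
      have e2 : (QuotientGroup.mk (M * B (n % m)) : PU11)
          = QuotientGroup.mk (B 1) * QuotientGroup.mk (B (n % m)) := rfl
      have hwn : w n 1 * w n (n % m) = w n 0 := by
        rw [show n % m = n from Nat.mod_eq_of_lt (by omega), w_one_mul_wn hn, w_zero hn]
      rw [e2, hBmk 1, hBmk (n % m), rho_mul,
        rho_congr ρ hwn _ (w_mem hn 0), ← hBmk 0]
    have hpm := pm_of_mk_eq hmk p
    rw [act_mul, ← hXn, ← hX0] at hpm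
    exact hpm
  have hR2 : pmEq (X 1) (act M (X (n - 1))) := by
    have hsub : (⟨w n ((n - 1) % m), w_mem hn ((n - 1) % m)⟩ : ↥(Gsub n)) = 1 := by
      apply Subtype.ext
      show w n ((n - 1) % m) = 1
      rw [Nat.mod_eq_of_lt (by omega)]
      exact w_nsub1 hn
    have hmk : (QuotientGroup.mk (B ((n - 1) % m)) : PU11)
        = QuotientGroup.mk (1 : SU11) := by
      rw [hBmk ((n - 1) % m), hsub, _root_.map_one]
      rfl
    have hpm0 := pm_of_mk_eq hmk q
    rw [act_one, ← hXn1] at hpm0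
    have hpm1 := pmEq_act M hpm0
    have hMq : act M q = X 1 := by rw [hX1, hMdef]
    rw [hMq] at hpm1
    exact pmEq_symm hpm1
  have hYm : Y m = act M (X m) := by
    simp only [hYdef]
    rw [Nat.mod_self, if_neg (by simp)]
  have hY1X : Y 1 = X 1 := by
    simp only [hYdef]
    rw [Nat.mod_eq_of_lt (by omega), if_pos ⟨by omega, by omega⟩]
  have hFm : F m = triArea c (act M (X 0)) (X 1) := by
    simp only [hFdef]
    rw [hYm1, hYm, hY1X, hXm]
  have hg0 : g 0 = triArea c (X 0) (X 1) := by
    simp only [hgdef]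
    try norm_num
  have hkey : (F (n - 1) - g (n - 1)) + (φ n - φ m) + (F m - g 0) = 0 := by
    rw [hδmid, hFm, hg0]
    have hgn1 : g (n - 1) = triArea c (X (n - 1)) (X n) := by
      simp only [hgdef]
      rw [show n - 1 + 1 = n by omega]
    rw [hgn1]
    have hφn : φ n = triArea c c' (X n) := rfl
    have hφm : φ m = triArea c c' (X 0) := by simp only [hφdef, hXm]
    rw [hφn, hφm]
    have e1 : triArea c (X (n - 1)) (act M (X n)) = triArea c (X (n - 1)) (X 0) :=
      triArea_pm₃ c (X (n - 1)) hR1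
    have e2 : triArea c (act M (X 0)) (X 1) = triArea c' (X 0) (X (n - 1)) := by
      rw [triArea_pm₃ c (act M (X 0)) hR2]
      have h3 := triArea_act M⁻¹ c (act M (X 0)) (act M (X (n - 1)))
      rw [act_inv_act, act_inv_act] at h3
      exact h3.symm
    have e3 : triArea c (X 0) (X 1) = triArea c' (X n) (X (n - 1)) := by
      rw [triArea_pm₃ c (X 0) hR2, triArea_pm₂ c (act M (X (n - 1))) (pmEq_symm hR1)]
      have h3 := triArea_act M⁻¹ c (act M (X n)) (act M (X (n - 1)))
      rw [act_inv_act, act_inv_act] at h3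
      exact h3.symm
    rw [e1, e2, e3]
    have cc1 := centre_change hc hc' (hXneg 0) (hXneg (n - 1))
    have cc2 := centre_change hc hc' (hXneg n) (hXneg (n - 1))
    have s1 := triArea_swap hc (hXneg (n - 1)) (hXneg 0)
    have s2 := triArea_swap hc (hXneg (n - 1)) (hXneg n)
    linarith [cc1, cc2, s1, s2]
  have hmain : ∑ j ∈ Finset.range m, F (j + 1) = ∑ j ∈ Finset.range m, g j := by
    linarith [hsum1, hsum2, hdist, hsplit, hpart1, hpart2, hkey]
  have hgoal2 : areaG n B' c
      (((M : SpecialLinearGroup (Fin 2) ℂ) : Matrix (Fin 2) (Fin 2) ℂ).mulVec q) p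
      = areaG n B' c (act M q) p := rfl
  rw [hgoal2, hRF, hmain, hL]

end HView
end
end
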